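/- arXiv:0904.1115 — 7 statements merged into one kernel-verified Lean document; each statement's English description precedes it below -/
import Mathlib

section
/- The function Q(t) = (e^{-αt} - e^{-βt})/(1 - e^{-t}) for t ≠ 0, with Q(0) = β - α, is increasing on (0, ∞) if and only if (β - α)(1 - α - β) ≥ 0 and (β - α)(|α - β| - α - β) ≥ 0. -/
open Set Filter Real Topology

lemma kder (c A B C D : ℝ) (u : ℝ) (hu : 0 < u) :
    HasDerivAt (fun u : ℝ => A + B*u + C*u^c + D*u^(c+1))
      (B + c*C*u^(c-1) + (c+1)*D*u^c) u := by
  have h1 : HasDerivAt (fun u : ℝ => u ^ c) (c * u ^ (c-1)) u :=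
    Real.hasDerivAt_rpow_const (Or.inl hu.ne')
  have h2 : HasDerivAt (fun u : ℝ => u ^ (c+1)) ((c+1) * u ^ (c+1-1)) u :=
    Real.hasDerivAt_rpow_const (Or.inl hu.ne')
  have := (((hasDerivAt_const u A).add ((hasDerivAt_id u).const_mul B)).add
      (h1.const_mul C)).add (h2.const_mul D)
  refine this.congr_deriv (Eq.symm ?_)
  simp only [add_sub_cancel_right]
  ring

lemma k'der (c A B C D : ℝ) (u : ℝ) (hu : 0 < u) :
    HasDerivAt (fun u : ℝ => B + c*C*u^(c-1) + (c+1)*D*u^c)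
      (c * u^(c-2) * ((c-1)*C + (c+1)*D*u)) u := by
  have h1 : HasDerivAt (fun u : ℝ => u ^ (c-1)) ((c-1) * u ^ (c-1-1)) u :=
    Real.hasDerivAt_rpow_const (Or.inl hu.ne')
  have h2 : HasDerivAt (fun u : ℝ => u ^ c) (c * u ^ (c-1)) u :=
    Real.hasDerivAt_rpow_const (Or.inl hu.ne')
  have := ((hasDerivAt_const u B).add (h1.const_mul (c*C))).add (h2.const_mul ((c+1)*D))
  refine this.congr_deriv (Eq.symm ?_)
  have e1 : c - 1 - 1 = c - 2 := by ring
  have e2 : u ^ (c-1) = u ^ (c-2) * u := by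
    rw [← Real.rpow_add_one hu.ne' (c-2)]; congr 1; ring
  rw [e1] at this ⊢
  rw [e2]; ring

lemma core (c A B C D : ℝ) (hc : 0 < c) (hA : A ≤ 0)
    (h1 : A + B + C + D = 0) (h2 : B + c*C + (c+1)*D = 0)
    (h3 : (c-1)*C + (c+1)*D ≤ 0) :
    ∀ u ∈ Set.Ioc (0:ℝ) 1, A + B*u + C*u^c + D*u^(c+1) ≤ 0 := by
  set k : ℝ → ℝ := fun u => A + B*u + C*u^c + D*u^(c+1) with hk
  set k' : ℝ → ℝ := fun u => B + c*C*u^(c-1) + (c+1)*D*u^c with hk'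
  set ψ : ℝ → ℝ := fun u => (c-1)*C + (c+1)*D*u with hψ
  have hk1 : k 1 = 0 := by simp [hk, Real.one_rpow]; linarith
  have hk'1 : k' 1 = 0 := by simp [hk', Real.one_rpow]; linarith
  have hψ1 : ψ 1 ≤ 0 := by simpa [hψ] using h3
  have hkd : ∀ u : ℝ, 0 < u → HasDerivAt k (k' u) u := fun u hu => kder c A B C D u hu
  have hk'd : ∀ u : ℝ, 0 < u → HasDerivAt k' (c * u^(c-2) * ψ u) u :=
    fun u hu => k'der c A B C D u hu
  -- Claim A: no down-crossing of k' from + to - within (0,1]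
  have claimA : ∀ x y : ℝ, 0 < x → x ≤ y → y ≤ 1 → 0 < k' x → k' y < 0 → False := by
    intro x y hx hxy hy1 hkx hky
    rcases eq_or_lt_of_le hxy with rfl | hxy
    · linarith
    rcases eq_or_lt_of_le hy1 with rfl | hy1
    · linarith
    -- ψ y > 0
    have hψy : 0 < ψ y := by
      by_contra hψy
      push_neg at hψy
      -- ψ ≤ 0 on [y,1], so k' antitone there, so k' y ≥ k' 1 = 0
      have hmono : AntitoneOn k' (Icc y 1) := by
        apply antitoneOn_of_deriv_nonpos (convex_Icc y 1)
        · intro u hu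
          exact (hk'd u (by have := hu.1; have := hx; linarith)).continuousAt.continuousWithinAt
        · intro u hu
          rw [interior_Icc] at hu
          exact (hk'd u (by have := hu.1; linarith)).differentiableAt.differentiableWithinAt
        · intro u hu
          rw [interior_Icc] at hu
          obtain ⟨huy, hu1⟩ := hu
          have hu0 : (0:ℝ) < u := by linarith
          rw [(hk'd u hu0).deriv]
          have hψu : ψ u ≤ 0 := by
            have key : (1 - y) * ψ u = (1 - u) * ψ y + (u - y) * ψ 1 := by
              simp only [hψ]; ring
            nlinarith [mul_nonpos_of_nonneg_of_nonpos (by linarith : (0:ℝ) ≤ 1 - u) hψy,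
              mul_nonpos_of_nonneg_of_nonpos (by linarith : (0:ℝ) ≤ u - y) hψ1]
          have hup : (0:ℝ) < u ^ (c-2) := Real.rpow_pos_of_pos hu0 _
          exact mul_nonpos_of_nonneg_of_nonpos (mul_pos hc hup).le hψu
      have := hmono (left_mem_Icc.2 (by linarith)) (right_mem_Icc.2 (by linarith)) hy1.le
      rw [hk'1] at this
      linarith
    -- slope of ψ is negative
    have hD : (c+1)*D < 0 := by
      have : ψ 1 - ψ y = (c+1)*D*(1-y) := by simp only [hψ]; ring
      nlinarith
    -- ψ ≥ 0 on [x,y], so k' monotone there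
    have hmono : MonotoneOn k' (Icc x y) := by
      apply monotoneOn_of_deriv_nonneg (convex_Icc x y)
      · intro u hu
        exact (hk'd u (by have := hu.1; linarith)).continuousAt.continuousWithinAt
      · intro u hu
        rw [interior_Icc] at hu
        exact (hk'd u (by have := hu.1; linarith)).differentiableAt.differentiableWithinAt
      · intro u hu
        rw [interior_Icc] at hu
        obtain ⟨hux, huy⟩ := hu
        have hu0 : (0:ℝ) < u := by linarith
        rw [(hk'd u hu0).deriv]
        have hψu : 0 ≤ ψ u := by
          have : ψ u - ψ y = (c+1)*D*(u - y) := by simp only [hψ]; ring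
          nlinarith
        have hup : (0:ℝ) < u ^ (c-2) := Real.rpow_pos_of_pos hu0 _
        exact mul_nonneg (mul_pos hc hup).le hψu
    have := hmono (left_mem_Icc.2 hxy.le) (right_mem_Icc.2 hxy.le) hxy.le
    linarith
  -- limit of k at 0+
  have hlim : Tendsto k (𝓝[>] (0:ℝ)) (𝓝 A) := by
    have hrp : ∀ p : ℝ, 0 < p → Tendsto (fun u : ℝ => u ^ p) (𝓝[>] (0:ℝ)) (𝓝 0) := by
      intro p hp
      have h1 : Tendsto (fun u : ℝ => Real.exp (p * Real.log u)) (𝓝[>] (0:ℝ)) (𝓝 0) := by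
        apply Real.tendsto_exp_atBot.comp
        exact (Real.tendsto_log_nhdsGT_zero.const_mul_atBot hp)
      refine h1.congr' ?_
      filter_upwards [self_mem_nhdsWithin] with u hu
      rw [Real.rpow_def_of_pos hu, mul_comm]
    have := ((tendsto_nhdsWithin_of_tendsto_nhds (continuous_id.tendsto (0:ℝ))).const_mul B).add
      ((hrp c hc).const_mul C) |>.add ((hrp (c+1) (by linarith)).const_mul D) |>.const_add A
    simpa only [hk, ← add_assoc, id, mul_zero, add_zero] using this
  -- main argument
  rintro u₀ ⟨hu₀, hu₀1⟩
  show k u₀ ≤ 0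
  rcases eq_or_lt_of_le hu₀1 with rfl | hu₀1
  · exact le_of_eq hk1
  by_cases hcase : ∀ y ∈ Icc u₀ 1, 0 ≤ k' y
  · -- k monotone on [u₀,1]
    have hmono : MonotoneOn k (Icc u₀ 1) := by
      apply monotoneOn_of_deriv_nonneg (convex_Icc u₀ 1)
      · intro u hu
        exact (hkd u (by have := hu.1; linarith)).continuousAt.continuousWithinAt
      · intro u hu
        rw [interior_Icc] at hu
        exact (hkd u (by have := hu.1; linarith)).differentiableAt.differentiableWithinAt
      · intro u hu
        rw [interior_Icc] at hu
        rw [(hkd u (by have := hu.1; linarith)).deriv]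
        exact hcase u ⟨hu.1.le, hu.2.le⟩
    have := hmono (left_mem_Icc.2 hu₀1.le) (right_mem_Icc.2 hu₀1.le) hu₀1.le
    rw [hk1] at this
    exact this
  · push_neg at hcase
    obtain ⟨y, hy, hky⟩ := hcase
    have hneg : ∀ x ∈ Ioc (0:ℝ) u₀, k' x ≤ 0 := by
      intro x hx
      by_contra hpos
      push_neg at hpos
      exact claimA x y hx.1 (hx.2.trans hy.1) hy.2 hpos hky
    have hanti : AntitoneOn k (Ioc (0:ℝ) u₀) := by
      apply antitoneOn_of_deriv_nonpos (convex_Ioc 0 u₀)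
      · intro u hu
        exact (hkd u hu.1).continuousAt.continuousWithinAt
      · intro u hu
        rw [interior_Ioc] at hu
        exact (hkd u hu.1).differentiableAt.differentiableWithinAt
      · intro u hu
        rw [interior_Ioc] at hu
        rw [(hkd u hu.1).deriv]
        exact hneg u ⟨hu.1, hu.2.le⟩
    have hub : k u₀ ≤ A := by
      apply ge_of_tendsto hlim
      filter_upwards [Ioo_mem_nhdsGT_of_mem ⟨le_refl 0, hu₀⟩] with x hx
      exact hanti ⟨hx.1, hx.2.le⟩ ⟨hu₀, le_refl u₀⟩ hx.2.le
    exact hub.trans hA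


lemma key (α β : ℝ)
    (hg : ∀ u ∈ Ioo (0:ℝ) 1, α*u^(α-1) - β*u^(β-1) + (1-α)*u^α + (β-1)*u^β ≤ 0) :
    MonotoneOn (fun t : ℝ => if t = 0 then β - α else
      (Real.exp (-α*t) - Real.exp (-β*t)) / (1 - Real.exp (-t))) (Set.Ioi 0) := by
  set f : ℝ → ℝ := fun u => (u^α - u^β)/(1-u) with hf
  have hfd : ∀ u ∈ Ioo (0:ℝ) 1, HasDerivAt f
      ((α*u^(α-1) - β*u^(β-1) + (1-α)*u^α + (β-1)*u^β) / (1-u)^2) u := by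
    rintro u ⟨hu0, hu1⟩
    have hnum : HasDerivAt (fun u : ℝ => u^α - u^β) (α*u^(α-1) - β*u^(β-1)) u := by
      have h1 : HasDerivAt (fun u : ℝ => u ^ α) (α * u ^ (α-1)) u :=
        Real.hasDerivAt_rpow_const (Or.inl hu0.ne')
      have h2 : HasDerivAt (fun u : ℝ => u ^ β) (β * u ^ (β-1)) u :=
        Real.hasDerivAt_rpow_const (Or.inl hu0.ne')
      exact h1.sub h2
    have hden : HasDerivAt (fun u : ℝ => 1 - u) (-1) u := by
      simpa using (hasDerivAt_id u).const_sub 1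
    have hne : (1:ℝ) - u ≠ 0 := by linarith
    have := hnum.div hden hne
    refine this.congr_deriv (Eq.symm ?_)
    have e1 : u ^ (α-1) * u = u ^ α := by
      rw [← Real.rpow_add_one hu0.ne']; congr 1; ring
    have e2 : u ^ (β-1) * u = u ^ β := by
      rw [← Real.rpow_add_one hu0.ne']; congr 1; ring
    congr 1
    linear_combination α*e1 - β*e2
  have hanti : AntitoneOn f (Ioo (0:ℝ) 1) := by
    apply antitoneOn_of_deriv_nonpos (convex_Ioo 0 1)
    · intro u hu
      exact (hfd u hu).continuousAt.continuousWithinAt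
    · intro u hu
      rw [interior_Ioo] at hu
      exact (hfd u hu).differentiableAt.differentiableWithinAt
    · intro u hu
      rw [interior_Ioo] at hu
      rw [(hfd u hu).deriv]
      apply div_nonpos_of_nonpos_of_nonneg (hg u hu) (sq_nonneg _)
  intro s hs t ht hst
  simp only [mem_Ioi] at hs ht
  have hes : Real.exp (-s) ∈ Ioo (0:ℝ) 1 :=
    ⟨Real.exp_pos _, Real.exp_lt_one_iff.2 (by linarith)⟩
  have het : Real.exp (-t) ∈ Ioo (0:ℝ) 1 :=
    ⟨Real.exp_pos _, Real.exp_lt_one_iff.2 (by linarith)⟩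
  have hle : Real.exp (-t) ≤ Real.exp (-s) := Real.exp_le_exp.2 (by linarith)
  have hQs : ∀ r : ℝ, 0 < r → (if r = 0 then β - α else
      (Real.exp (-α*r) - Real.exp (-β*r)) / (1 - Real.exp (-r))) = f (Real.exp (-r)) := by
    intro r hr
    rw [if_neg hr.ne']
    simp only [hf]
    congr 1
    · congr 1 <;> rw [← Real.exp_mul] <;> congr 1 <;> ring
  simp only [hQs s hs, hQs t ht]
  exact hanti het hes hle


lemma case1 (α β : ℝ) (hlt : α < β) (hα : α ≤ 0) (hsum : α + β ≤ 1) :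
    ∀ u ∈ Ioo (0:ℝ) 1, α*u^(α-1) - β*u^(β-1) + (1-α)*u^α + (β-1)*u^β ≤ 0 := by
  rintro u ⟨hu0, hu1⟩
  have hcore := core (β-α) α (1-α) (-β) (β-1) (by linarith) hα (by ring)
    (by ring) (by nlinarith) u ⟨hu0, hu1.le⟩
  have hp : (0:ℝ) < u ^ (α-1) := Real.rpow_pos_of_pos hu0 _
  have e1 : u ^ (α-1) * u = u ^ α := by
    rw [← Real.rpow_add_one hu0.ne']; congr 1; ring
  have e2 : u ^ (α-1) * u ^ (β-α) = u ^ (β-1) := by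
    rw [← Real.rpow_add hu0]; congr 1; ring
  have e3 : u ^ (α-1) * u ^ (β-α+1) = u ^ β := by
    rw [← Real.rpow_add hu0]; congr 1; ring
  have hfact : α*u^(α-1) - β*u^(β-1) + (1-α)*u^α + (β-1)*u^β
      = u^(α-1) * (α + (1-α)*u + (-β)*u^(β-α) + (β-1)*u^(β-α+1)) := by
    rw [← e1, ← e2, ← e3]; ring
  rw [hfact]
  exact mul_nonpos_of_nonneg_of_nonpos hp.le hcore

lemma case2 (α β : ℝ) (hlt : β < α) (hβ : 0 ≤ β) (hsum : 1 ≤ α + β) :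
    ∀ u ∈ Ioo (0:ℝ) 1, α*u^(α-1) - β*u^(β-1) + (1-α)*u^α + (β-1)*u^β ≤ 0 := by
  rintro u ⟨hu0, hu1⟩
  have hcore := core (α-β) (-β) (β-1) α (1-α) (by linarith) (by linarith) (by ring)
    (by ring) (by nlinarith) u ⟨hu0, hu1.le⟩
  have hp : (0:ℝ) < u ^ (β-1) := Real.rpow_pos_of_pos hu0 _
  have e1 : u ^ (β-1) * u = u ^ β := by
    rw [← Real.rpow_add_one hu0.ne']; congr 1; ring
  have e2 : u ^ (β-1) * u ^ (α-β) = u ^ (α-1) := by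
    rw [← Real.rpow_add hu0]; congr 1; ring
  have e3 : u ^ (β-1) * u ^ (α-β+1) = u ^ α := by
    rw [← Real.rpow_add hu0]; congr 1; ring
  have hfact : α*u^(α-1) - β*u^(β-1) + (1-α)*u^α + (β-1)*u^β
      = u^(β-1) * ((-β) + (β-1)*u + α*u^(α-β) + (1-α)*u^(α-β+1)) := by
    rw [← e1, ← e2, ← e3]; ring
  rw [hfact]
  exact mul_nonpos_of_nonneg_of_nonpos hp.le hcore


lemma limQ0 (α β : ℝ) :
    Tendsto (fun t : ℝ => (Real.exp (-α*t) - Real.exp (-β*t)) / (1 - Real.exp (-t)))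
      (𝓝[>] (0:ℝ)) (𝓝 (β - α)) := by
  have hexp : ∀ a : ℝ, HasDerivAt (fun t : ℝ => Real.exp (-a*t)) (-a) 0 := by
    intro a
    have h1 : HasDerivAt (fun t : ℝ => -a*t) (-a) 0 := by
      simpa using (hasDerivAt_id (0:ℝ)).const_mul (-a)
    simpa using h1.exp
  have hnum : Tendsto (fun t : ℝ => (Real.exp (-α*t) - Real.exp (-β*t)) / t)
      (𝓝[>] (0:ℝ)) (𝓝 (β - α)) := by
    have hd : HasDerivAt (fun t : ℝ => Real.exp (-α*t) - Real.exp (-β*t)) (β - α) 0 := by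
      have := (hexp α).sub (hexp β)
      refine this.congr_deriv (Eq.symm ?_); ring
    rw [hasDerivAt_iff_tendsto_slope] at hd
    have := hd.mono_left (nhdsWithin_mono 0 (fun x hx => ne_of_gt hx))
    refine this.congr' ?_
    filter_upwards [self_mem_nhdsWithin] with t (ht : 0 < t)
    rw [slope_def_field]
    simp
  have hden : Tendsto (fun t : ℝ => t / (1 - Real.exp (-t))) (𝓝[>] (0:ℝ)) (𝓝 1) := by
    have hd : HasDerivAt (fun t : ℝ => 1 - Real.exp (-t)) 1 0 := by
      have := (hasDerivAt_const (0:ℝ) 1).sub (hexp 1)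
      simpa [Pi.sub_def] using this
    rw [hasDerivAt_iff_tendsto_slope] at hd
    have h2 := (hd.mono_left (nhdsWithin_mono 0 (fun x hx => ne_of_gt hx))).inv₀ one_ne_zero
    rw [inv_one] at h2
    refine h2.congr' ?_
    filter_upwards [self_mem_nhdsWithin] with t (ht : 0 < t)
    rw [slope_def_field]
    simp [inv_div]
  have := hnum.mul hden
  rw [mul_one] at this
  refine this.congr' ?_
  filter_upwards [self_mem_nhdsWithin] with t (ht : 0 < t)
  have hd : (1:ℝ) - Real.exp (-t) ≠ 0 := by
    have : Real.exp (-t) < 1 := Real.exp_lt_one_iff.2 (by linarith)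
    linarith
  field_simp

lemma lbQ (α β : ℝ)
    (hm : MonotoneOn (fun t : ℝ => if t = 0 then β - α else
      (Real.exp (-α*t) - Real.exp (-β*t)) / (1 - Real.exp (-t))) (Set.Ioi 0)) :
    ∀ t ∈ Set.Ioi (0:ℝ), β - α ≤ (Real.exp (-α*t) - Real.exp (-β*t)) / (1 - Real.exp (-t)) := by
  intro t ht
  rw [mem_Ioi] at ht
  apply le_of_tendsto (limQ0 α β)
  filter_upwards [Ioo_mem_nhdsGT ht] with s hs
  have := hm (mem_Ioi.2 hs.1) (mem_Ioi.2 ht) hs.2.le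
  simp only [] at this
  rwa [if_neg hs.1.ne', if_neg ht.ne'] at this


lemma cond1 (α β : ℝ)
    (hlb : ∀ t ∈ Set.Ioi (0:ℝ), β - α ≤ (Real.exp (-α*t) - Real.exp (-β*t)) / (1 - Real.exp (-t))) :
    0 ≤ (β - α) * (1 - α - β) := by
  by_contra hcon
  push_neg at hcon
  have hexp : ∀ (a t : ℝ), HasDerivAt (fun t : ℝ => Real.exp (-a*t)) (-a * Real.exp (-a*t)) t := by
    intro a t
    have h1 : HasDerivAt (fun t : ℝ => -a*t) (-a) t := by
      simpa using (hasDerivAt_id t).const_mul (-a)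
    have := h1.exp
    convert this using 1; ring
  have hcont : ∀ a : ℝ, Continuous (fun t : ℝ => Real.exp (-a*t)) :=
    fun a => Real.continuous_exp.comp (continuous_const.mul continuous_id)
  have hNd : ∀ t : ℝ, HasDerivAt
      (fun t => Real.exp (-α*t) - Real.exp (-β*t) - (β-α)*(1-Real.exp (-t)))
      (-α*Real.exp (-α*t) + β*Real.exp (-β*t) - (β-α)*Real.exp (-t)) t := by
    intro t
    have h1 : HasDerivAt (fun t : ℝ => Real.exp (-t)) (-Real.exp (-t)) t := by
      have := hexp 1 t; simpa using this
    have := ((hexp α t).sub (hexp β t)).sub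
      (((hasDerivAt_const t (1:ℝ)).sub h1).const_mul (β-α))
    refine this.congr_deriv (Eq.symm ?_)
    ring
  have hN1d : ∀ t : ℝ, HasDerivAt
      (fun t => -α*Real.exp (-α*t) + β*Real.exp (-β*t) - (β-α)*Real.exp (-t))
      (α^2*Real.exp (-α*t) - β^2*Real.exp (-β*t) + (β-α)*Real.exp (-t)) t := by
    intro t
    have h1 : HasDerivAt (fun t : ℝ => Real.exp (-t)) (-Real.exp (-t)) t := by
      have := hexp 1 t; simpa using this
    have := (((hexp α t).const_mul (-α)).add ((hexp β t).const_mul β)).sub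
      (h1.const_mul (β-α))
    refine this.congr_deriv (Eq.symm ?_)
    ring
  have hN2cont : Continuous (fun t : ℝ =>
      α^2*Real.exp (-α*t) - β^2*Real.exp (-β*t) + (β-α)*Real.exp (-t)) := by
    have h1 : Continuous (fun t : ℝ => Real.exp (-t)) := by
      have := hcont 1; simpa using this
    exact ((continuous_const.mul (hcont α)).sub (continuous_const.mul (hcont β) : Continuous fun t : ℝ => β^2 * Real.exp (-β*t))).add (continuous_const.mul h1 : Continuous fun t : ℝ => (β-α) * Real.exp (-t))
  have hN20 : α^2*Real.exp (-α*0) - β^2*Real.exp (-β*0) + (β-α)*Real.exp (-0) < 0 := by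
    norm_num
    nlinarith
  have hev := (hN2cont.tendsto 0).eventually_lt_const hN20
  rw [Metric.eventually_nhds_iff] at hev
  obtain ⟨δ, hδ, hball⟩ := hev
  set ε := δ/2 with hε
  have hεpos : 0 < ε := by positivity
  have hN2neg : ∀ t ∈ Ioo (0:ℝ) ε,
      α^2*Real.exp (-α*t) - β^2*Real.exp (-β*t) + (β-α)*Real.exp (-t) < 0 := by
    intro t ht
    apply hball
    rw [Real.dist_eq, sub_zero, abs_of_pos ht.1]
    have := ht.2; simp only [hε] at this ⊢; linarith
  have hN1anti : StrictAntiOn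
      (fun t => -α*Real.exp (-α*t) + β*Real.exp (-β*t) - (β-α)*Real.exp (-t)) (Icc 0 ε) := by
    apply strictAntiOn_of_deriv_neg (convex_Icc 0 ε)
    · exact Continuous.continuousOn (by
        have h1 : Continuous (fun t : ℝ => Real.exp (-t)) := by
          have := hcont 1; simpa using this
        exact ((continuous_const.mul (hcont α) : Continuous fun t : ℝ => -α * Real.exp (-α*t)).add (continuous_const.mul (hcont β) : Continuous fun t : ℝ => β * Real.exp (-β*t))).sub (continuous_const.mul h1 : Continuous fun t : ℝ => (β-α) * Real.exp (-t)))
    · intro t ht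
      rw [interior_Icc] at ht
      rw [(hN1d t).deriv]
      exact hN2neg t ht
  have hN1neg : ∀ t ∈ Ioo (0:ℝ) ε,
      -α*Real.exp (-α*t) + β*Real.exp (-β*t) - (β-α)*Real.exp (-t) < 0 := by
    intro t ht
    have := hN1anti (left_mem_Icc.2 hεpos.le) ⟨ht.1.le, ht.2.le⟩ ht.1
    simp only [mul_zero, neg_zero, Real.exp_zero] at this
    linarith
  have hNanti : StrictAntiOn
      (fun t => Real.exp (-α*t) - Real.exp (-β*t) - (β-α)*(1-Real.exp (-t))) (Icc 0 ε) := by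
    apply strictAntiOn_of_deriv_neg (convex_Icc 0 ε)
    · exact Continuous.continuousOn (by
        have h1 : Continuous (fun t : ℝ => Real.exp (-t)) := by
          have := hcont 1; simpa using this
        exact ((hcont α).sub (hcont β)).sub (continuous_const.mul (continuous_const.sub h1) : Continuous fun t : ℝ => (β-α) * (1 - Real.exp (-t))))
    · intro t ht
      rw [interior_Icc] at ht
      rw [(hNd t).deriv]
      exact hN1neg t ht
  have hNε : Real.exp (-α*ε) - Real.exp (-β*ε) - (β-α)*(1-Real.exp (-ε)) < 0 := by
    have := hNanti (left_mem_Icc.2 hεpos.le) (right_mem_Icc.2 hεpos.le) hεpos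
    simp only [mul_zero, neg_zero, Real.exp_zero] at this
    linarith
  have hlbε := hlb ε (mem_Ioi.2 hεpos)
  have hden : (0:ℝ) < 1 - Real.exp (-ε) := by
    have : Real.exp (-ε) < 1 := Real.exp_lt_one_iff.2 (by linarith)
    linarith
  rw [le_div_iff₀ hden] at hlbε
  nlinarith


lemma expTop (a : ℝ) (ha : 0 < a) : Tendsto (fun t : ℝ => Real.exp (-a*t)) atTop (𝓝 0) := by
  apply Real.tendsto_exp_atBot.comp
  have : Tendsto (fun t : ℝ => -a*t) atTop atBot := by
    apply Tendsto.const_mul_atTop_of_neg (by linarith : -a < 0) tendsto_id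
  exact this

lemma denTop : Tendsto (fun t : ℝ => 1 - Real.exp (-t)) atTop (𝓝 1) := by
  have := (expTop 1 one_pos).const_sub 1
  simpa using this

lemma alpha_le (α β : ℝ) (hlt : α < β)
    (hlb : ∀ t ∈ Set.Ioi (0:ℝ), β - α ≤ (Real.exp (-α*t) - Real.exp (-β*t)) / (1 - Real.exp (-t))) :
    α ≤ 0 := by
  by_contra hcon
  push_neg at hcon
  have hβ : 0 < β := by linarith
  have hQtop : Tendsto (fun t : ℝ => (Real.exp (-α*t) - Real.exp (-β*t)) / (1 - Real.exp (-t)))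
      atTop (𝓝 0) := by
    have hnum := (expTop α hcon).sub (expTop β hβ)
    rw [sub_zero] at hnum
    have := hnum.div denTop one_ne_zero
    simpa [Pi.div_def] using this
  have : β - α ≤ 0 := by
    apply ge_of_tendsto hQtop
    filter_upwards [eventually_gt_atTop 0] with t ht
    exact hlb t (mem_Ioi.2 ht)
  linarith

lemma beta_ge (α β : ℝ) (hlt : β < α)
    (hlb : ∀ t ∈ Set.Ioi (0:ℝ), β - α ≤ (Real.exp (-α*t) - Real.exp (-β*t)) / (1 - Real.exp (-t))) :
    0 ≤ β := by
  by_contra hcon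
  push_neg at hcon
  have hQbot : Tendsto (fun t : ℝ => (Real.exp (-α*t) - Real.exp (-β*t)) / (1 - Real.exp (-t)))
      atTop atBot := by
    have h1 : Tendsto (fun t : ℝ => Real.exp (-β*t)) atTop atTop := by
      apply Real.tendsto_exp_atTop.comp
      exact Tendsto.const_mul_atTop (by linarith : 0 < -β) tendsto_id
    have h2 : Tendsto (fun t : ℝ => Real.exp ((β-α)*t) - 1) atTop (𝓝 (-1)) := by
      have := (expTop (α-β) (by linarith)).sub_const 1
      rw [zero_sub] at this
      convert this using 3
      ring_nf
    have hnum : Tendsto (fun t : ℝ => Real.exp (-β*t) * (Real.exp ((β-α)*t) - 1)) atTop atBot :=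
      h1.atTop_mul_neg (by norm_num) h2
    have hnum' : Tendsto (fun t : ℝ => Real.exp (-α*t) - Real.exp (-β*t)) atTop atBot := by
      refine hnum.congr (fun t => ?_)
      rw [mul_sub, ← Real.exp_add, mul_one]
      congr 2
      ring
    have hinv : Tendsto (fun t : ℝ => (1 - Real.exp (-t))⁻¹) atTop (𝓝 1) := by
      have := denTop.inv₀ one_ne_zero
      simpa using this
    have := hnum'.atBot_mul_pos (by norm_num : (0:ℝ) < 1) hinv
    refine this.congr (fun t => ?_)
    rw [div_eq_mul_inv]
  have hev : ∀ᶠ t in atTop, (Real.exp (-α*t) - Real.exp (-β*t)) / (1 - Real.exp (-t)) < β - α :=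
    hQbot.eventually_lt_atBot (β - α)
  obtain ⟨t, ht, ht0⟩ := (hev.and (eventually_gt_atTop 0)).exists
  exact absurd (hlb t (mem_Ioi.2 ht0)) (not_le.2 ht)

theorem stmt0 (α β : ℝ) (hab : α ≠ β) (h01 : (α, β) ≠ (0, 1)) (h10 : (α, β) ≠ (1, 0)) :
    MonotoneOn (fun t : ℝ => if t = 0 then β - α else (Real.exp (-α*t) - Real.exp (-β*t)) / (1 - Real.exp (-t))) (Set.Ioi 0) ↔
      (β - α) * (1 - α - β) ≥ 0 ∧ (β - α) * (|α - β| - α - β) ≥ 0 := by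
  constructor
  · intro hm
    have hlb := lbQ α β hm
    refine ⟨cond1 α β hlb, ?_⟩
    rcases lt_trichotomy α β with hlt | heq | hlt
    · have hα : α ≤ 0 := alpha_le α β hlt hlb
      rw [abs_of_neg (by linarith : α - β < 0)]
      nlinarith
    · exact absurd heq hab
    · have hβ : 0 ≤ β := beta_ge α β hlt hlb
      rw [abs_of_pos (by linarith : 0 < α - β)]
      nlinarith
  · rintro ⟨hc1, hc2⟩
    rcases lt_trichotomy α β with hlt | heq | hlt
    · rw [abs_of_neg (by linarith : α - β < 0)] at hc2
      have hα : α ≤ 0 := by nlinarith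
      have hsum : α + β ≤ 1 := by nlinarith
      exact key α β (case1 α β hlt hα hsum)
    · exact absurd heq hab
    · rw [abs_of_pos (by linarith : 0 < α - β)] at hc2
      have hβ : 0 ≤ β := by nlinarith
      have hsum : 1 ≤ α + β := by nlinarith
      exact key α β (case2 α β hlt hβ hsum)
end

section
/- The function Q(t) = (e^{-αt} - e^{-βt})/(1 - e^{-t}) for t ≠ 0, with Q(0) = β - α, is decreasing on (0, ∞) if and only if (β - α)(1 - α - β) ≤ 0 and (β - α)(|α - β| - α - β) ≤ 0. -/
open Real

private theorem aux_L2 (x : ℝ) (hx : 0 ≤ x) : Real.sinh x ≤ x * Real.cosh x := by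
  have key : ∀ t : ℝ, HasDerivAt (fun t : ℝ => t * Real.cosh t - Real.sinh t) (t * Real.sinh t) t := by
    intro t
    have h := ((hasDerivAt_id t).mul (Real.hasDerivAt_cosh t)).sub (Real.hasDerivAt_sinh t)
    refine h.congr_deriv ?_; simp [id]; try ring
  have mono := monotoneOn_of_deriv_nonneg (convex_Ici 0)
    (Continuous.continuousOn (by continuity))
    (fun t _ => (key t).differentiableAt.differentiableWithinAt)
    (fun t ht => by
      rw [(key t).deriv]
      rw [interior_Ici] at ht
      have : (0:ℝ) ≤ Real.sinh t := by
        rw [← Real.sinh_zero]; exact Real.sinh_le_sinh.2 (le_of_lt ht)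
      exact mul_nonneg (le_of_lt ht) this)
  have := mono (Set.self_mem_Ici) (Set.mem_Ici.2 hx) hx
  simp at this
  linarith

private theorem aux_L3 (x : ℝ) (hx : 0 ≤ x) : x * Real.cosh x ≤ Real.sinh x + x^2 * Real.sinh x := by
  have key : ∀ t : ℝ, HasDerivAt (fun t : ℝ => Real.sinh t + t^2 * Real.sinh t - t * Real.cosh t)
      (t * Real.sinh t + t^2 * Real.cosh t) t := by
    intro t
    have h := ((Real.hasDerivAt_sinh t).add (((hasDerivAt_pow 2 t).mul (Real.hasDerivAt_sinh t)))).sub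
      ((hasDerivAt_id t).mul (Real.hasDerivAt_cosh t))
    refine h.congr_deriv ?_; simp [id]; try ring
  have mono := monotoneOn_of_deriv_nonneg (convex_Ici 0)
    (Continuous.continuousOn (by continuity))
    (fun t _ => (key t).differentiableAt.differentiableWithinAt)
    (fun t ht => by
      rw [(key t).deriv]
      rw [interior_Ici] at ht
      have h1 : (0:ℝ) ≤ Real.sinh t := by
        rw [← Real.sinh_zero]; exact Real.sinh_le_sinh.2 (le_of_lt ht)
      have h2 := Real.cosh_pos (x := t)
      have ht' : (0:ℝ) < t := ht
      nlinarith [mul_nonneg ht'.le h1, mul_pos (mul_pos ht' ht') h2])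
  have := mono (Set.self_mem_Ici) (Set.mem_Ici.2 hx) hx
  simp at this
  linarith

private theorem aux_L1 (x y : ℝ) (hy : 0 ≤ y) (hxy : y ≤ x) : x * Real.sinh y ≤ y * Real.sinh x := by
  have key : ∀ t : ℝ, HasDerivAt (fun t : ℝ => y * Real.sinh t - t * Real.sinh y)
      (y * Real.cosh t - Real.sinh y) t := by
    intro t
    have h := ((Real.hasDerivAt_sinh t).const_mul y).sub ((hasDerivAt_id t).mul_const (Real.sinh y))
    refine h.congr_deriv ?_; simp [id]; try ring
  have mono := monotoneOn_of_deriv_nonneg (convex_Ici y)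
    (Continuous.continuousOn (by continuity))
    (fun t _ => (key t).differentiableAt.differentiableWithinAt)
    (fun t ht => by
      rw [(key t).deriv]
      rw [interior_Ici] at ht
      have h1 : Real.cosh y ≤ Real.cosh t := by
        rw [Real.cosh_le_cosh]
        rw [abs_of_nonneg hy, abs_of_nonneg (hy.trans ht.le)]
        exact ht.le
      have h2 := aux_L2 y hy
      nlinarith)
  have := mono (Set.self_mem_Ici) (Set.mem_Ici.2 hxy) hxy
  simp at this
  linarith

private theorem aux_K1 (d u : ℝ) (hd0 : 0 < d) (hd1 : d ≤ 1) (hu : 0 < u) :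
    d * Real.cosh (d*u) * Real.sinh u ≤ Real.sinh (d*u) * Real.cosh u := by
  have h := aux_L1 (u + d*u) (u - d*u) (by nlinarith) (by nlinarith)
  rw [Real.sinh_sub, Real.sinh_add] at h
  have h2 : u * ((1+d) * (Real.sinh u * Real.cosh (d*u) - Real.cosh u * Real.sinh (d*u)))
      ≤ u * ((1-d) * (Real.sinh u * Real.cosh (d*u) + Real.cosh u * Real.sinh (d*u))) := by
    nlinarith [h]
  have h3 := le_of_mul_le_mul_left h2 hu
  nlinarith [h3]

private theorem aux_K3 (e u : ℝ) (he : 1 ≤ e) (hu : 0 < u) :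
    Real.sinh (e*u) * Real.cosh u ≤ e * Real.cosh (e*u) * Real.sinh u := by
  have h := aux_L1 (e*u + u) (e*u - u) (by nlinarith) (by nlinarith)
  rw [Real.sinh_sub, Real.sinh_add] at h
  have h2 : u * ((e+1) * (Real.sinh (e*u) * Real.cosh u - Real.cosh (e*u) * Real.sinh u))
      ≤ u * ((e-1) * (Real.sinh (e*u) * Real.cosh u + Real.cosh (e*u) * Real.sinh u)) := by
    nlinarith [h]
  have h3 := le_of_mul_le_mul_left h2 hu
  nlinarith [h3]

private theorem aux_quad1 (d A B : ℝ) (hA : 0 < A) (hB : 0 < B) (key : 1 + d*(B*B-1) ≤ A*A) :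
    d*((A+A⁻¹)/2)*((B-B⁻¹)/2) - (A-A⁻¹)/2*((B+B⁻¹)/2) ≤ (d-1)*((A-A⁻¹)/2*((B-B⁻¹)/2)) := by
  have hA' : A ≠ 0 := ne_of_gt hA
  have hB' : B ≠ 0 := ne_of_gt hB
  rw [← sub_nonneg]
  have hid : (d-1)*((A-A⁻¹)/2*((B-B⁻¹)/2)) - (d*((A+A⁻¹)/2)*((B-B⁻¹)/2) - (A-A⁻¹)/2*((B+B⁻¹)/2))
      = (A*A - (1 + d*(B*B-1))) * (A⁻¹*B⁻¹) / 2 := by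
    field_simp
    ring
  rw [hid]
  have h1 : 0 ≤ A*A - (1 + d*(B*B-1)) := by linarith
  positivity

private theorem aux_quad2 (e A B : ℝ) (hA : 0 < A) (hB : 0 < B) (key : A*A ≤ 1 + e*(B*B-1)) :
    (e-1)*((A-A⁻¹)/2*((B-B⁻¹)/2)) ≤ e*((A+A⁻¹)/2)*((B-B⁻¹)/2) - (A-A⁻¹)/2*((B+B⁻¹)/2) := by
  have hA' : A ≠ 0 := ne_of_gt hA
  have hB' : B ≠ 0 := ne_of_gt hB
  rw [← sub_nonneg]
  have hid : (e*((A+A⁻¹)/2)*((B-B⁻¹)/2) - (A-A⁻¹)/2*((B+B⁻¹)/2)) - (e-1)*((A-A⁻¹)/2*((B-B⁻¹)/2))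
      = ((1 + e*(B*B-1)) - A*A) * (A⁻¹*B⁻¹) / 2 := by
    field_simp
    ring
  rw [hid]
  have h1 : 0 ≤ (1 + e*(B*B-1)) - A*A := by linarith
  positivity

private theorem aux_K2 (d u : ℝ) (hd : 1 ≤ d) (hu : 0 < u) :
    d * Real.cosh (d*u) * Real.sinh u - Real.sinh (d*u) * Real.cosh u
      ≤ (d-1) * (Real.sinh (d*u) * Real.sinh u) := by
  have hB := Real.exp_pos u
  have hA := Real.exp_pos (d*u)
  have key : 1 + d * (Real.exp u * Real.exp u - 1) ≤ Real.exp (d*u) * Real.exp (d*u) := by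
    have hb := one_add_mul_self_le_rpow_one_add (s := Real.exp u * Real.exp u - 1) (p := d)
      (by nlinarith) hd
    have h1 : (1 + (Real.exp u * Real.exp u - 1)) = Real.exp (2*u) := by
      rw [two_mul, Real.exp_add]; ring
    have h2 : Real.exp (2*u) ^ d = Real.exp (d*u) * Real.exp (d*u) := by
      rw [← Real.exp_mul, ← Real.exp_add]; ring_nf
    rw [h1, h2] at hb
    linarith
  simp only [Real.sinh_eq, Real.cosh_eq, Real.exp_neg]
  exact aux_quad1 d _ _ hA hB key

private theorem aux_K4 (e u : ℝ) (he1 : e ≤ 1) (hu : 0 < u) (he0 : 0 ≤ e) :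
    (e-1) * (Real.sinh (e*u) * Real.sinh u)
      ≤ e * Real.cosh (e*u) * Real.sinh u - Real.sinh (e*u) * Real.cosh u := by
  have hB := Real.exp_pos u
  have hA := Real.exp_pos (e*u)
  have key : Real.exp (e*u) * Real.exp (e*u) ≤ 1 + e * (Real.exp u * Real.exp u - 1) := by
    have hb := rpow_one_add_le_one_add_mul_self (s := Real.exp u * Real.exp u - 1) (p := e)
      (by nlinarith) he0 he1
    have h1 : (1 + (Real.exp u * Real.exp u - 1)) = Real.exp (2*u) := by
      rw [two_mul, Real.exp_add]; ring
    have h2 : Real.exp (2*u) ^ e = Real.exp (e*u) * Real.exp (e*u) := by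
      rw [← Real.exp_mul, ← Real.exp_add]; ring_nf
    rw [h1, h2] at hb
    linarith
  simp only [Real.sinh_eq, Real.cosh_eq, Real.exp_neg]
  exact aux_quad2 e _ _ hA hB key

noncomputable def NN (d c u : ℝ) : ℝ :=
  d * Real.cosh (d*u) * Real.sinh u - Real.sinh (d*u) * Real.cosh u
    - c * (Real.sinh (d*u) * Real.sinh u)

private theorem sinh_pos' {x : ℝ} (h : 0 < x) : 0 < Real.sinh x := Real.sinh_pos_iff.2 h

private theorem aux_pt_pos (d c u : ℝ) (hd : 0 < d) (hc0 : 0 ≤ c) (hc1 : d - 1 ≤ c) (hu : 0 < u) :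
    NN d c u ≤ 0 := by
  unfold NN
  have S1 : 0 < Real.sinh (d*u) := sinh_pos' (by positivity)
  have S2 : 0 < Real.sinh u := sinh_pos' hu
  rcases le_or_gt d 1 with h1 | h1
  · have := aux_K1 d u hd h1 hu
    nlinarith [mul_nonneg hc0 (mul_pos S1 S2).le]
  · have := aux_K2 d u h1.le hu
    nlinarith [mul_le_mul_of_nonneg_right hc1 (mul_pos S1 S2).le]

private theorem aux_pt_neg (d c u : ℝ) (hd : d < 0) (hc0 : c ≤ 0) (hc1 : c ≤ -d - 1) (hu : 0 < u) :
    NN d c u ≤ 0 := by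
  have he : 0 < -d := by linarith
  have hrw1 : Real.sinh (d*u) = -Real.sinh (-d*u) := by
    rw [← Real.sinh_neg]; ring_nf
  have hrw2 : Real.cosh (d*u) = Real.cosh (-d*u) := by
    rw [← Real.cosh_neg]; ring_nf
  unfold NN
  rw [hrw1, hrw2]
  have S1 : 0 < Real.sinh (-d*u) := sinh_pos' (by positivity)
  have S2 : 0 < Real.sinh u := sinh_pos' hu
  rcases le_or_gt 1 (-d) with h1 | h1
  · have := aux_K3 (-d) u h1 hu
    nlinarith [mul_nonpos_of_nonpos_of_nonneg hc0 (mul_pos S1 S2).le]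
  · have := aux_K4 (-d) u h1.le hu he.le
    nlinarith [mul_le_mul_of_nonneg_right hc1 (mul_pos S1 S2).le]

private theorem aux_nec_pos1 (d c : ℝ) (hd : 0 < d) (hN : ∀ u, 0 < u → NN d c u ≤ 0) : 0 ≤ c := by
  by_contra hc
  push_neg at hc
  set u := -c/2 with hu_def
  have hu : 0 < u := by simp [hu_def]; linarith
  have huc : u < -c := by simp [hu_def]; linarith
  have h := hN u hu
  unfold NN at h
  have S1 : 0 < Real.sinh (d*u) := sinh_pos' (by positivity)
  have S2 : 0 < Real.sinh u := sinh_pos' hu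
  have A1 := aux_L2 (d*u) (by positivity)
  have A2 := aux_L3 u hu.le
  have F1 : Real.sinh (d*u) * Real.sinh u ≤ d*u*Real.cosh (d*u) * Real.sinh u := by
    nlinarith [mul_le_mul_of_nonneg_right A1 S2.le]
  have F2 : u * (Real.sinh (d*u) * Real.cosh u) ≤ Real.sinh (d*u) * Real.sinh u + u^2 * (Real.sinh (d*u) * Real.sinh u) := by
    nlinarith [mul_le_mul_of_nonneg_left A2 S1.le]
  have Hu : u * NN d c u ≥ (-u - c) * u * (Real.sinh (d*u) * Real.sinh u) := by
    unfold NN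
    nlinarith [F1, F2]
  have : 0 < u * NN d c u := by
    have hpos : 0 < (-u - c) * u * (Real.sinh (d*u) * Real.sinh u) := by
      have : 0 < -u - c := by linarith
      positivity
    linarith
  nlinarith [this, hN u hu]

private theorem aux_nec_pos2 (d c : ℝ) (hd : 0 < d) (hN : ∀ u, 0 < u → NN d c u ≤ 0) : d - 1 ≤ c := by
  have hc0 := aux_nec_pos1 d c hd hN
  rcases le_or_gt d 1 with h1 | h1
  · linarith
  by_contra hcon
  push_neg at hcon
  set X := 1 / (d - 1 - c) with hX_def
  have hX : 0 < X := by rw [hX_def]; apply div_pos one_pos; linarith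
  set u := Real.arsinh X + 1 with hu_def
  have hu : 0 < u := by
    have := Real.arsinh_nonneg_iff.2 hX.le
    rw [hu_def]; linarith
  have hsinh : X < Real.sinh u := by
    calc X = Real.sinh (Real.arsinh X) := (Real.sinh_arsinh X).symm
    _ < Real.sinh u := by rw [Real.sinh_lt_sinh]; rw [hu_def]; linarith
  have hXs : 1 < (d - 1 - c) * Real.sinh u := by
    rw [hX_def] at hsinh
    rw [div_lt_iff₀ (by linarith)] at hsinh
    linarith [hsinh]
  have S1 : 0 < Real.sinh (d*u) := sinh_pos' (by positivity)
  have S2 : 0 < Real.sinh u := sinh_pos' hu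
  have hcosh : Real.cosh u = Real.sinh u + Real.exp (-u) := by
    have := Real.cosh_sub_sinh u; linarith
  have hcd : Real.sinh (d*u) ≤ Real.cosh (d*u) := (Real.sinh_lt_cosh _).le
  have hexp : Real.exp (-u) ≤ 1 := Real.exp_le_one_iff.2 (by linarith)
  have h := hN u hu
  unfold NN at h
  nlinarith [mul_le_mul_of_nonneg_right hcd (mul_pos (show (0:ℝ) < d - 0 by linarith) S2).le,
    mul_lt_mul_of_pos_left hXs S1, mul_le_mul_of_nonneg_left hexp S1.le,
    mul_le_mul_of_nonneg_right hcd S2.le, mul_pos S1 S2]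

private theorem aux_nec_neg1 (d c : ℝ) (hd : d < 0) (hN : ∀ u, 0 < u → NN d c u ≤ 0) : c ≤ 0 := by
  by_contra hc
  push_neg at hc
  have he : 0 < -d := by linarith
  set e := -d with he_def
  obtain ⟨u, hu, huc⟩ : ∃ u, 0 < u ∧ e^2 * u < c := by
    refine ⟨c / (2 * e^2), by positivity, ?_⟩
    have h2 : e^2 * (c / (2 * e^2)) = c/2 := by field_simp
    linarith
  have hrw1 : Real.sinh (d*u) = -Real.sinh (e*u) := by
    rw [he_def, ← Real.sinh_neg]; ring_nf
  have hrw2 : Real.cosh (d*u) = Real.cosh (e*u) := by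
    rw [he_def, ← Real.cosh_neg]; ring_nf
  have hd_e : d = -e := by rw [he_def]; ring
  have h := hN u hu
  unfold NN at h
  rw [hrw1, hrw2, hd_e] at h
  have S1 : 0 < Real.sinh (e*u) := sinh_pos' (by positivity)
  have S2 : 0 < Real.sinh u := sinh_pos' hu
  have A1 := aux_L3 (e*u) (by positivity)
  have A2 := aux_L2 u hu.le
  have F1 : u * (e * Real.cosh (e*u) * Real.sinh u) ≤ Real.sinh (e*u) * Real.sinh u + e^2*u^2 * (Real.sinh (e*u) * Real.sinh u) := by
    nlinarith [mul_le_mul_of_nonneg_right A1 S2.le]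
  have F2 : Real.sinh (e*u) * Real.sinh u ≤ u * (Real.sinh (e*u) * Real.cosh u) := by
    nlinarith [mul_le_mul_of_nonneg_left A2 S1.le]
  have key : 0 < u * (c - e^2*u) * (Real.sinh (e*u) * Real.sinh u) := by
    have : 0 < c - e^2*u := by linarith
    positivity
  nlinarith [mul_le_mul_of_nonneg_left h hu.le, F1, F2, key]

private theorem aux_nec_neg2 (d c : ℝ) (hd : d < 0) (hN : ∀ u, 0 < u → NN d c u ≤ 0) : c ≤ -d - 1 := by
  have hc0 := aux_nec_neg1 d c hd hN
  have he : 0 < -d := by linarith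
  set e := -d with he_def
  rcases le_or_gt 1 e with h1 | h1
  · linarith
  by_contra hcon
  push_neg at hcon
  have hce : 0 < c + 1 - e := by linarith
  set X := e / (c + 1 - e) with hX_def
  have hX : 0 < X := by rw [hX_def]; exact div_pos he hce
  set u := (Real.arsinh X + 1) / e with hu_def
  have harsinh := Real.arsinh_nonneg_iff.2 hX.le
  have hu : 0 < u := by rw [hu_def]; positivity
  have heu : e * u = Real.arsinh X + 1 := by
    rw [hu_def, mul_div_cancel₀ _ (ne_of_gt he)]
  have hsinh : X < Real.sinh (e*u) := by
    calc X = Real.sinh (Real.arsinh X) := (Real.sinh_arsinh X).symm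
    _ < Real.sinh (e*u) := by rw [Real.sinh_lt_sinh, heu]; linarith
  have hXs : e < (c + 1 - e) * Real.sinh (e*u) := by
    rw [hX_def, div_lt_iff₀ hce] at hsinh
    linarith
  have S1 : 0 < Real.sinh (e*u) := sinh_pos' (by positivity)
  have S2 : 0 < Real.sinh u := sinh_pos' hu
  have hcosh : Real.cosh (e*u) = Real.sinh (e*u) + Real.exp (-(e*u)) := by
    have := Real.cosh_sub_sinh (e*u); linarith
  have hcu : Real.sinh u ≤ Real.cosh u := (Real.sinh_lt_cosh _).le
  have hexp : Real.exp (-(e*u)) ≤ 1 := Real.exp_le_one_iff.2 (by nlinarith)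
  have hrw1 : Real.sinh (d*u) = -Real.sinh (e*u) := by
    rw [he_def, ← Real.sinh_neg]; ring_nf
  have hrw2 : Real.cosh (d*u) = Real.cosh (e*u) := by
    rw [he_def, ← Real.cosh_neg]; ring_nf
  have hd_e : d = -e := by rw [he_def]; ring
  have h := hN u hu
  unfold NN at h
  rw [hrw1, hrw2, hd_e] at h
  have hcosh2 : e * Real.cosh (e*u) * Real.sinh u
      = e * Real.sinh (e*u) * Real.sinh u + e * Real.exp (-(e*u)) * Real.sinh u := by
    rw [hcosh]; ring
  nlinarith [mul_le_mul_of_nonneg_left hcu S1.le,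
    mul_lt_mul_of_pos_right hXs S2, hcosh2,
    mul_le_mul_of_nonneg_left hexp (mul_pos he S2).le,
    mul_pos S1 S2]

noncomputable def HH (d c : ℝ) : ℝ → ℝ :=
  fun t => Real.exp (-c*(t/2)) * Real.sinh (d*(t/2)) / Real.sinh (t/2)

private theorem aux_eq (α β t : ℝ) :
    (Real.exp (-α*t) - Real.exp (-β*t)) / (1 - Real.exp (-t))
      = HH (β-α) (α+β-1) t := by
  unfold HH
  have key : ∀ x y : ℝ, Real.exp x * (2 * Real.sinh y) = Real.exp (x+y) - Real.exp (x-y) := by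
    intro x y
    rw [Real.sinh_eq, Real.exp_add, show x - y = x + (-y) by ring, Real.exp_add]
    ring
  have n1 : Real.exp (-α*t) - Real.exp (-β*t)
      = Real.exp (-(α+β)*(t/2)) * (2 * Real.sinh ((β-α)*(t/2))) := by
    rw [key]
    congr 1 <;> congr 1 <;> ring
  have n2 : 1 - Real.exp (-t) = Real.exp (-(t/2)) * (2 * Real.sinh (t/2)) := by
    rw [key]
    rw [show -(t/2) + t/2 = (0:ℝ) by ring, Real.exp_zero]
    congr 1
    congr 1
    ring
  rw [n1, n2, mul_div_mul_comm, ← Real.exp_sub]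
  have h2 : 2 * Real.sinh ((β-α)*(t/2)) / (2 * Real.sinh (t/2))
      = Real.sinh ((β-α)*(t/2)) / Real.sinh (t/2) := by
    rw [mul_div_mul_left _ _ (two_ne_zero)]
  rw [h2, show -(α+β)*(t/2) - -(t/2) = -(α+β-1)*(t/2) by ring, mul_div_assoc]

private theorem aux_deriv (d c t : ℝ) (ht : 0 < t) :
    HasDerivAt (HH d c)
      (Real.exp (-c*(t/2)) / (2 * Real.sinh (t/2)^2) * NN d c (t/2)) t := by
  have hs : Real.sinh (t/2) ≠ 0 := ne_of_gt (Real.sinh_pos_iff.2 (by linarith))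
  have hhalf : HasDerivAt (fun t : ℝ => t/2) (1/2) t := (hasDerivAt_id t).div_const 2
  have h1 : HasDerivAt (fun t : ℝ => Real.exp (-c*(t/2))) (Real.exp (-c*(t/2)) * (-c * (1/2))) t :=
    (hhalf.const_mul (-c)).exp
  have h2 : HasDerivAt (fun t : ℝ => Real.sinh (d*(t/2))) (Real.cosh (d*(t/2)) * (d * (1/2))) t :=
    (hhalf.const_mul d).sinh
  have h3 : HasDerivAt (fun t : ℝ => Real.sinh (t/2)) (Real.cosh (t/2) * (1/2)) t :=
    hhalf.sinh
  have h := (h1.mul h2).div h3 hs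
  refine h.congr_deriv ?_
  unfold NN
  simp only [Pi.mul_apply]
  field_simp
  ring

private theorem aux_slope {g : ℝ → ℝ} {m t : ℝ} (ht : 0 < t)
    (hg : AntitoneOn g (Set.Ioi 0)) (hd : HasDerivAt g m t) : m ≤ 0 := by
  have h := hasDerivAt_iff_tendsto_slope.1 hd
  have hev : ∀ᶠ y in nhdsWithin t {t}ᶜ, slope g t y ≤ 0 := by
    filter_upwards [self_mem_nhdsWithin,
      mem_nhdsWithin_of_mem_nhds (Ioi_mem_nhds ht)] with y hy hy0
    have hyne : y ≠ t := hy
    have hy0' : (0:ℝ) < y := hy0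
    rw [slope_def_field]
    rcases lt_or_gt_of_ne hyne with h1 | h1
    · apply div_nonpos_iff.2
      left
      constructor
      · simp only [sub_nonneg]
        exact hg (Set.mem_Ioi.2 hy0') (Set.mem_Ioi.2 ht) h1.le
      · linarith
    · apply div_nonpos_iff.2
      right
      constructor
      · simp only [sub_nonpos]
        exact hg (Set.mem_Ioi.2 ht) (Set.mem_Ioi.2 hy0') h1.le
      · linarith
  exact le_of_tendsto h hev

private theorem aux_char (d c : ℝ) :
    AntitoneOn (HH d c) (Set.Ioi 0) ↔ ∀ u, 0 < u → NN d c u ≤ 0 := by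
  constructor
  · intro hA u hu
    have ht : (0:ℝ) < 2*u := by linarith
    have hder := aux_deriv d c (2*u) ht
    have hm := aux_slope ht hA hder
    have hu2 : (2*u)/2 = u := by ring
    rw [hu2] at hm
    have hE : 0 < Real.exp (-c*u) / (2 * Real.sinh u ^ 2) := by
      have := sinh_pos' hu
      positivity
    by_contra hcon
    push_neg at hcon
    nlinarith [mul_pos hE hcon]
  · intro hN
    apply antitoneOn_of_deriv_nonpos (convex_Ioi 0)
    · apply DifferentiableOn.continuousOn (𝕜 := ℝ) (f := HH d c)
      intro t ht
      exact (aux_deriv d c t ht).differentiableAt.differentiableWithinAt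
    · rw [interior_Ioi]
      intro t ht
      exact (aux_deriv d c t ht).differentiableAt.differentiableWithinAt
    · rw [interior_Ioi]
      intro t ht
      rw [(aux_deriv d c t ht).deriv]
      have ht' : (0:ℝ) < t := ht
      have hNt := hN (t/2) (by linarith)
      have hE : 0 ≤ Real.exp (-c*(t/2)) / (2 * Real.sinh (t/2) ^ 2) := by positivity
      exact mul_nonpos_of_nonneg_of_nonpos hE hNt

theorem stmt1 (α β : ℝ) (hab : α ≠ β) (h01 : (α, β) ≠ (0, 1)) (h10 : (α, β) ≠ (1, 0)) :
    AntitoneOn (fun t : ℝ => if t = 0 then β - α else (Real.exp (-α*t) - Real.exp (-β*t)) / (1 - Real.exp (-t))) (Set.Ioi 0) ↔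
      (β - α) * (1 - α - β) ≤ 0 ∧ (β - α) * (|α - β| - α - β) ≤ 0 := by
  have heq : Set.EqOn (fun t : ℝ => if t = 0 then β - α else (Real.exp (-α*t) - Real.exp (-β*t)) / (1 - Real.exp (-t)))
      (HH (β-α) (α+β-1)) (Set.Ioi 0) := by
    intro t ht
    have ht' : (0:ℝ) < t := ht
    simp only [if_neg (ne_of_gt ht')]
    exact aux_eq α β t
  have hiff : AntitoneOn (fun t : ℝ => if t = 0 then β - α else (Real.exp (-α*t) - Real.exp (-β*t)) / (1 - Real.exp (-t))) (Set.Ioi 0)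
      ↔ AntitoneOn (HH (β-α) (α+β-1)) (Set.Ioi 0) := by
    constructor
    · intro h; exact h.congr heq
    · intro h; exact h.congr heq.symm
  rw [hiff, aux_char]
  have hd0 : β - α ≠ 0 := sub_ne_zero_of_ne (Ne.symm hab)
  rcases lt_or_gt_of_ne hd0 with hd | hd
  · -- d < 0, α > β
    have hab' : β < α := by linarith
    rw [abs_of_pos (show (0:ℝ) < α - β by linarith)]
    constructor
    · intro hN
      have h1 := aux_nec_neg1 _ _ hd hN
      have h2 := aux_nec_neg2 _ _ hd hN
      constructor
      · nlinarith
      · nlinarith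
    · rintro ⟨h1, h2⟩ u hu
      apply aux_pt_neg _ _ _ hd _ _ hu
      · nlinarith
      · nlinarith
  · -- d > 0, β > α
    have hab' : α < β := by linarith
    rw [abs_of_neg (show α - β < (0:ℝ) by linarith)]
    constructor
    · intro hN
      have h1 := aux_nec_pos1 _ _ hd hN
      have h2 := aux_nec_pos2 _ _ hd hN
      constructor
      · nlinarith
      · nlinarith
    · rintro ⟨h1, h2⟩ u hu
      apply aux_pt_pos _ _ _ hd _ _ hu
      · nlinarith
      · nlinarith
end

section
/- The function Q(t) = (e^{-αt} - e^{-βt})/(1 - e^{-t}) for t ≠ 0, with Q(0) = β - α, is increasing on all of ℝ if and only if (β - α)(|α - β| - α - β) ≥ 0 and (β - α)(2 - |α - β| - α - β) ≥ 0. -/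
open Real Set Filter Topology

noncomputable def Qf (α β : ℝ) : ℝ → ℝ := fun t : ℝ =>
  if t = 0 then β - α else (Real.exp (-α*t) - Real.exp (-β*t)) / (1 - Real.exp (-t))

lemma den_ne {t : ℝ} (ht : t ≠ 0) : 1 - Real.exp (-t) ≠ 0 := by
  intro h
  have : Real.exp (-t) = 1 := by linarith
  rw [Real.exp_eq_one_iff] at this
  exact ht (by linarith [neg_eq_zero.mp this])

lemma formula_hasDeriv (α β : ℝ) {t : ℝ} (ht : t ≠ 0) :
    HasDerivAt (fun t : ℝ => (Real.exp (-α*t) - Real.exp (-β*t)) / (1 - Real.exp (-t)))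
      (((-α * Real.exp (-α*t) + β * Real.exp (-β*t)) * (1 - Real.exp (-t)) -
        (Real.exp (-α*t) - Real.exp (-β*t)) * Real.exp (-t)) / (1 - Real.exp (-t))^2) t := by
  have ea : HasDerivAt (fun t : ℝ => Real.exp (-α*t)) (-α * Real.exp (-α*t)) t := by
    simpa [mul_comm] using ((hasDerivAt_id t).const_mul (-α)).exp
  have eb : HasDerivAt (fun t : ℝ => Real.exp (-β*t)) (-β * Real.exp (-β*t)) t := by
    simpa [mul_comm] using ((hasDerivAt_id t).const_mul (-β)).exp
  have ec : HasDerivAt (fun t : ℝ => 1 - Real.exp (-t)) (Real.exp (-t)) t := by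
    have : HasDerivAt (fun t : ℝ => Real.exp (-t)) (-Real.exp (-t)) t := by
      simpa using ((hasDerivAt_id t).neg).exp
    simpa using (this.const_sub 1)
  have : HasDerivAt (fun t : ℝ => (Real.exp (-α*t) - Real.exp (-β*t)) / (1 - Real.exp (-t)))
      (((-α * Real.exp (-α*t) - -β * Real.exp (-β*t)) * (1 - Real.exp (-t)) -
        (Real.exp (-α*t) - Real.exp (-β*t)) * Real.exp (-t)) / (1 - Real.exp (-t))^2) t :=
    (ea.sub eb).div ec (den_ne ht)
  convert this using 1
  ring

lemma core_ineq {x α β : ℝ} (hx : 0 < x) (hα : α ≤ 0) (hβ : β ≤ 1) (hαβ : α ≤ β) :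
    Real.exp (α * Real.log x) * (x + α * (1 - x)) ≤
      Real.exp (β * Real.log x) * (x + β * (1 - x)) := by
  set L := Real.log x with hL
  set F : ℝ → ℝ := fun u => Real.exp (u * L) * (x + u * (1 - x)) with hFdef
  have hF : ∀ u : ℝ, HasDerivAt F (Real.exp (u * L) * (L * (x + u * (1 - x)) + (1 - x))) u := by
    intro u
    have h1 : HasDerivAt (fun u : ℝ => u * L) L u := by
      simpa using (hasDerivAt_id u).mul_const L
    have h2 : HasDerivAt (fun u : ℝ => Real.exp (u * L)) (Real.exp (u * L) * L) u := h1.exp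
    have h3 : HasDerivAt (fun u : ℝ => x + u * (1 - x)) (1 - x) u := by
      simpa using ((hasDerivAt_id u).mul_const (1 - x)).const_add x
    have : HasDerivAt (fun u : ℝ => Real.exp (u * L) * (x + u * (1 - x))) _ u := h2.mul h3
    convert this using 1
    ring
  have hLx : L * (1 - x) ≤ 0 := by
    rcases le_total x 1 with h | h
    · exact mul_nonpos_of_nonpos_of_nonneg (Real.log_nonpos hx.le h) (by linarith)
    · exact mul_nonpos_of_nonneg_of_nonpos (Real.log_nonneg h) (by linarith)
  have hG0 : 0 ≤ L * x + (1 - x) := by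
    have h := Real.one_sub_inv_le_log_of_pos hx
    have hxi : x * x⁻¹ = 1 := mul_inv_cancel₀ hx.ne'
    nlinarith
  have hG1 : L + (1 - x) ≤ 0 := by
    have := Real.log_le_sub_one_of_pos hx
    linarith
  have key : ∀ a b : ℝ, a ≤ b → 0 ≤ L * (x + b * (1 - x)) + (1 - x) → F a ≤ F b := by
    intro a b hab hGb
    have hm : MonotoneOn F (Icc a b) := by
      apply monotoneOn_of_deriv_nonneg (convex_Icc a b)
      · exact fun u _ => (hF u).continuousAt.continuousWithinAt
      · intro u _
        exact (hF u).differentiableAt.differentiableWithinAt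
      · intro u hu
        rw [interior_Icc] at hu
        rw [(hF u).deriv]
        have : 0 ≤ L * (x + u * (1 - x)) + (1 - x) := by nlinarith [hu.2.le]
        positivity
    exact hm (left_mem_Icc.2 hab) (right_mem_Icc.2 hab) hab
  have key2 : ∀ a b : ℝ, a ≤ b → L * (x + a * (1 - x)) + (1 - x) ≤ 0 → F b ≤ F a := by
    intro a b hab hGa
    have hm : AntitoneOn F (Icc a b) := by
      apply antitoneOn_of_deriv_nonpos (convex_Icc a b)
      · exact fun u _ => (hF u).continuousAt.continuousWithinAt
      · intro u _
        exact (hF u).differentiableAt.differentiableWithinAt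
      · intro u hu
        rw [interior_Icc] at hu
        rw [(hF u).deriv]
        have h1 : L * (x + u * (1 - x)) + (1 - x) ≤ 0 := by nlinarith [hu.1.le]
        exact mul_nonpos_of_nonneg_of_nonpos (Real.exp_nonneg _) h1
    exact hm (left_mem_Icc.2 hab) (right_mem_Icc.2 hab) hab
  have F0 : F 0 = x := by simp [hFdef]
  have F1 : F 1 = x := by
    simp [hFdef, hL, Real.exp_log hx]
  show F α ≤ F β
  rcases le_or_gt β 0 with hb | hb
  · exact key α β hαβ (by nlinarith)
  · have h1 : F α ≤ F 0 := key α 0 hα (by simpa using hG0)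
    rcases le_or_gt 0 (L * (x + β * (1 - x)) + (1 - x)) with hGb | hGb
    · have := key 0 β hb.le hGb
      linarith
    · have h2 := key2 β 1 hβ hGb.le
      rw [F0] at h1
      rw [F1] at h2
      linarith

lemma num_nonneg {α β : ℝ} (hα : α ≤ 0) (hβ : β ≤ 1) (hαβ : α ≤ β) (t : ℝ) :
    0 ≤ ((-α * Real.exp (-α*t) + β * Real.exp (-β*t)) * (1 - Real.exp (-t)) -
        (Real.exp (-α*t) - Real.exp (-β*t)) * Real.exp (-t)) / (1 - Real.exp (-t))^2 := by
  apply div_nonneg _ (sq_nonneg _)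
  have h := core_ineq (Real.exp_pos (-t)) hα hβ hαβ
  rw [Real.log_exp] at h
  have e1 : α * -t = -α * t := by ring
  have e2 : β * -t = -β * t := by ring
  rw [e1, e2] at h
  have key : (-α * Real.exp (-α*t) + β * Real.exp (-β*t)) * (1 - Real.exp (-t)) -
      (Real.exp (-α*t) - Real.exp (-β*t)) * Real.exp (-t)
      = Real.exp (-β*t) * (Real.exp (-t) + β * (1 - Real.exp (-t)))
        - Real.exp (-α*t) * (Real.exp (-t) + α * (1 - Real.exp (-t))) := by ring
  rw [key]
  linarith

lemma mono_on_aux {α β : ℝ} (hα : α ≤ 0) (hβ : β ≤ 1) (hαβ : α ≤ β)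
    {s : Set ℝ} (hconv : Convex ℝ s) (hopen : IsOpen s) (hs : (0:ℝ) ∉ s) :
    MonotoneOn (Qf α β) s := by
  have hne : ∀ u ∈ s, u ≠ 0 := fun u hu h => hs (h ▸ hu)
  have hm : MonotoneOn (fun t : ℝ => (Real.exp (-α*t) - Real.exp (-β*t)) / (1 - Real.exp (-t))) s := by
    apply monotoneOn_of_deriv_nonneg hconv
    · intro u hu
      exact (formula_hasDeriv α β (hne u hu)).continuousAt.continuousWithinAt
    · intro u hu
      rw [hopen.interior_eq] at hu
      exact (formula_hasDeriv α β (hne u hu)).differentiableAt.differentiableWithinAt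
    · intro u hu
      rw [hopen.interior_eq] at hu
      rw [(formula_hasDeriv α β (hne u hu)).deriv]
      exact num_nonneg hα hβ hαβ u
  intro a ha b hb hab
  have := hm ha hb hab
  simpa [Qf, if_neg (hne a ha), if_neg (hne b hb)] using this

lemma hslope (c : ℝ) : Tendsto (fun t : ℝ => (Real.exp (-c*t) - 1) / t) (𝓝[≠] (0:ℝ)) (𝓝 (-c)) := by
  have h : HasDerivAt (fun t : ℝ => Real.exp (-c*t)) (-c) 0 := by
    have := ((hasDerivAt_id (0:ℝ)).const_mul (-c)).exp
    simpa [mul_comm] using this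
  have := hasDerivAt_iff_tendsto_slope.mp h
  refine this.congr (fun t => ?_)
  simp [slope_def_field, div_eq_div_iff]

lemma tendsto_Qf (α β : ℝ) : Tendsto (Qf α β) (𝓝[≠] (0:ℝ)) (𝓝 (β - α)) := by
  have hC : Tendsto (fun t : ℝ => (1 - Real.exp (-t)) / t) (𝓝[≠] (0:ℝ)) (𝓝 1) := by
    have := (hslope 1).neg
    refine (by simpa using this : Tendsto (fun t : ℝ => -((Real.exp (-1*t) - 1) / t)) (𝓝[≠] (0:ℝ)) (𝓝 1)).congr (fun t => ?_)
    simp only [neg_one_mul]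
    ring
  have h : Tendsto (fun t : ℝ => ((Real.exp (-α*t) - 1) / t - (Real.exp (-β*t) - 1) / t) /
      ((1 - Real.exp (-t)) / t)) (𝓝[≠] (0:ℝ)) _ := ((hslope α).sub (hslope β)).div hC one_ne_zero
  have h2 : Tendsto (fun t : ℝ => ((Real.exp (-α*t) - 1) / t - (Real.exp (-β*t) - 1) / t) /
      ((1 - Real.exp (-t)) / t)) (𝓝[≠] (0:ℝ)) (𝓝 (β - α)) := by
    convert h using 2
    ring
  refine h2.congr' ?_
  filter_upwards [self_mem_nhdsWithin] with t ht
  simp only [Qf, if_neg (by exact ht : t ≠ 0)]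
  rw [div_sub_div_same]
  have he : Real.exp (-α*t) - 1 - (Real.exp (-β*t) - 1) = Real.exp (-α*t) - Real.exp (-β*t) := by ring
  rw [he]
  exact div_div_div_cancel_right₀ (by exact ht : t ≠ 0) _ _

lemma fwd1 {α β : ℝ} (hαβ : α < β) (hm : Monotone (Qf α β)) : α ≤ 0 := by
  by_contra h
  push_neg at h
  have hexp : ∀ c : ℝ, 0 < c → Tendsto (fun t : ℝ => Real.exp (-c*t)) atTop (𝓝 0) := by
    intro c hc
    exact Real.tendsto_exp_atBot.comp
      (Tendsto.neg_mul_atTop (by linarith : -c < 0) tendsto_const_nhds tendsto_id)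
  have hnum := (hexp α h).sub (hexp β (lt_trans h hαβ))
  have hden : Tendsto (fun t : ℝ => 1 - Real.exp (-t)) atTop (𝓝 1) := by
    have := (hexp 1 one_pos).const_sub 1
    simpa using this
  have hdiv : Tendsto (fun t : ℝ => (Real.exp (-α*t) - Real.exp (-β*t)) / (1 - Real.exp (-t))) atTop _ :=
    hnum.div hden (by norm_num)
  have hlim : Tendsto (Qf α β) atTop (𝓝 0) := by
    refine (by simpa using hdiv : Tendsto (fun t : ℝ =>
        (Real.exp (-α*t) - Real.exp (-β*t)) / (1 - Real.exp (-t))) atTop (𝓝 0)).congr' ?_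
    filter_upwards [eventually_ne_atTop (0:ℝ)] with t ht
    simp [Qf, if_neg ht]
  have : β - α ≤ 0 := by
    refine ge_of_tendsto hlim ?_
    filter_upwards [eventually_ge_atTop (0:ℝ)] with t ht
    have := hm ht
    simpa [Qf] using this
  linarith

lemma fwd2 {α β : ℝ} (hαβ : α < β) (hm : Monotone (Qf α β)) : β ≤ 1 := by
  by_contra h
  push_neg at h
  have hA : Tendsto (fun t : ℝ => Real.exp ((1-β)*t)) atBot atTop :=
    Real.tendsto_exp_atTop.comp
      (Tendsto.neg_mul_atBot (by linarith : 1 - β < 0) tendsto_const_nhds tendsto_id)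
  have hB : Tendsto (fun t : ℝ => Real.exp ((β-α)*t) - 1) atBot (𝓝 (-1)) := by
    have := Real.tendsto_exp_atBot.comp
      (Tendsto.pos_mul_atBot (by linarith : 0 < β - α) tendsto_const_nhds tendsto_id)
    have h2 := this.sub_const 1
    simpa using h2
  have hnum : Tendsto (fun t : ℝ => Real.exp ((1-β)*t) * (Real.exp ((β-α)*t) - 1)) atBot atBot :=
    hA.atTop_mul_neg (by norm_num) hB
  have hden : Tendsto (fun t : ℝ => (Real.exp t - 1)⁻¹) atBot (𝓝 (-1)) := by
    have : Tendsto (fun t : ℝ => Real.exp t - 1) atBot (𝓝 (-1)) := by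
      simpa using Real.tendsto_exp_atBot.sub_const 1
    have := this.inv₀ (by norm_num)
    simpa [inv_neg] using this
  have hlim : Tendsto (Qf α β) atBot atTop := by
    have hmul := hnum.atBot_mul_neg (by norm_num : (-1:ℝ) < 0) hden
    refine hmul.congr' ?_
    filter_upwards [eventually_ne_atBot (0:ℝ)] with t ht
    rw [show Qf α β t = (Real.exp (-α*t) - Real.exp (-β*t)) / (1 - Real.exp (-t)) from if_neg ht]
    rw [← div_eq_mul_inv, div_eq_div_iff (sub_ne_zero.mpr (by simpa using ht)) (den_ne ht)]
    simp only [mul_sub, sub_mul, mul_one, one_mul, ← Real.exp_add]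
    ring_nf
  have hev := (hlim.eventually_gt_atTop (β - α)).and (eventually_le_atBot (0:ℝ))
  obtain ⟨t, h1, h2⟩ := hev.exists
  have h3 := hm h2
  have h0 : Qf α β 0 = β - α := by simp [Qf]
  linarith

lemma bwd {α β : ℝ} (hα : α ≤ 0) (hβ : β ≤ 1) (hαβ : α ≤ β) : Monotone (Qf α β) := by
  have h0 : Qf α β 0 = β - α := by simp [Qf]
  have mIoi : MonotoneOn (Qf α β) (Ioi 0) :=
    mono_on_aux hα hβ hαβ (convex_Ioi 0) isOpen_Ioi (by simp)
  have mIio : MonotoneOn (Qf α β) (Iio 0) :=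
    mono_on_aux hα hβ hαβ (convex_Iio 0) isOpen_Iio (by simp)
  have hpos : ∀ t : ℝ, 0 < t → β - α ≤ Qf α β t := by
    intro t ht
    have hlim : Tendsto (Qf α β) (𝓝[>] (0:ℝ)) (𝓝 (β - α)) :=
      (tendsto_Qf α β).mono_left (nhdsWithin_mono 0 (fun x hx => ne_of_gt hx))
    refine le_of_tendsto hlim ?_
    filter_upwards [Ioo_mem_nhdsGT_of_mem (by constructor <;> [exact le_refl 0; exact ht])]
      with u hu
    exact mIoi hu.1 ht hu.2.le
  have hneg : ∀ t : ℝ, t < 0 → Qf α β t ≤ β - α := by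
    intro t ht
    have hlim : Tendsto (Qf α β) (𝓝[<] (0:ℝ)) (𝓝 (β - α)) :=
      (tendsto_Qf α β).mono_left (nhdsWithin_mono 0 (fun x hx => ne_of_lt hx))
    refine ge_of_tendsto hlim ?_
    filter_upwards [Ioo_mem_nhdsLT_of_mem (by constructor <;> [exact ht; exact le_refl 0])]
      with u hu
    exact mIio ht (hu.2) hu.1.le
  intro s t hst
  rcases lt_trichotomy s 0 with hs | hs | hs
  · rcases lt_trichotomy t 0 with ht' | ht' | ht'
    · exact mIio hs ht' hst
    · rw [ht', h0]; exact hneg s hs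
    · exact le_trans (hneg s hs) ((h0 ▸ hpos t ht'))
  · rw [hs, h0]
    rcases eq_or_lt_of_le hst with h | h
    · rw [hs] at h; rw [← h, h0]
    · rw [hs] at h; exact hpos t h
  · exact mIoi hs (lt_of_lt_of_le hs hst) hst

lemma Qf_symm (α β : ℝ) : Qf (1-α) (1-β) = fun t => -Qf α β (-t) := by
  funext t
  by_cases ht : t = 0
  · subst ht; simp [Qf]
  · have hnt : -t ≠ 0 := neg_ne_zero.mpr ht
    simp only [Qf, if_neg ht, if_neg hnt]
    have h1 : 1 - Real.exp (-(-t)) ≠ 0 := den_ne hnt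
    rw [div_eq_iff (den_ne ht), ← neg_div, div_mul_eq_mul_div, eq_div_iff h1]
    simp only [mul_sub, sub_mul, mul_one, one_mul, neg_sub, neg_mul, ← Real.exp_add]
    ring_nf

lemma mono_neg_comp (f : ℝ → ℝ) : Monotone (fun t => -f (-t)) ↔ Monotone f := by
  constructor
  · intro h a b hab
    have := h (neg_le_neg hab)
    simpa using this
  · intro h a b hab
    simp only [neg_le_neg_iff]
    exact h (neg_le_neg hab)

lemma main_lt {α β : ℝ} (hαβ : α < β) : Monotone (Qf α β) ↔ (α ≤ 0 ∧ β ≤ 1) :=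
  ⟨fun h => ⟨fwd1 hαβ h, fwd2 hαβ h⟩, fun h => bwd h.1 h.2 hαβ.le⟩

theorem stmt3 (α β : ℝ) (hab : α ≠ β) (h01 : (α, β) ≠ (0, 1)) (h10 : (α, β) ≠ (1, 0)) :
    Monotone (fun t : ℝ => if t = 0 then β - α else (Real.exp (-α*t) - Real.exp (-β*t)) / (1 - Real.exp (-t))) ↔
      (β - α) * (|α - β| - α - β) ≥ 0 ∧ (β - α) * (2 - |α - β| - α - β) ≥ 0 := by
  show Monotone (Qf α β) ↔ _
  rcases hab.lt_or_gt with h | h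
  · rw [main_lt h]
    have habs : |α - β| = β - α := by
      rw [abs_of_neg (by linarith)]; ring
    rw [habs]
    constructor
    · rintro ⟨h1, h2⟩
      constructor <;> nlinarith
    · rintro ⟨h1, h2⟩
      constructor <;> nlinarith
  · have hiff : Monotone (Qf α β) ↔ Monotone (Qf (1-α) (1-β)) := by
      rw [Qf_symm]; exact (mono_neg_comp _).symm
    rw [hiff, main_lt (by linarith : (1:ℝ)-α < 1-β)]
    have habs : |α - β| = α - β := abs_of_pos (by linarith)
    rw [habs]
    constructor
    · rintro ⟨h1, h2⟩
      constructor <;> nlinarith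
    · rintro ⟨h1, h2⟩
      constructor <;> nlinarith
end

section
/- If β - α > 1, then the function Q(t) = (e^{-αt} - e^{-βt})/(1 - e^{-t}) for t ≠ 0, with Q(0) = β - α, is logarithmically convex on ℝ; if 0 < β - α < 1, it is logarithmically concave on ℝ. -/
open Real Set

noncomputable def Mfun (v : ℝ) : ℝ := if v = 0 then 0 else v / (Real.exp v - 1) - 1

lemma Mfun_zero : Mfun 0 = 0 := by simp [Mfun]

lemma expm1_pos {v : ℝ} (hv : 0 < v) : 0 < Real.exp v - 1 := by
  have := Real.one_lt_exp_iff.2 hv; linarith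

lemma expm1_neg {v : ℝ} (hv : v < 0) : Real.exp v - 1 < 0 := by
  have := Real.exp_lt_one_iff.2 hv; linarith

lemma expm1_ne {v : ℝ} (hv : v ≠ 0) : Real.exp v - 1 ≠ 0 := by
  rcases hv.lt_or_gt with h | h
  · exact (expm1_neg h).ne
  · exact (expm1_pos h).ne'

lemma expm1_div_pos {v : ℝ} (hv : v ≠ 0) : 0 < (Real.exp v - 1) / v := by
  rcases hv.lt_or_gt with h | h
  · exact div_pos_of_neg_of_neg (expm1_neg h) h
  · exact div_pos (expm1_pos h) h

/-- derivative of `h v = v (e^v + 1) - 2(e^v - 1)` is `v e^v - e^v + 1 ≥ 0`. -/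
lemma hfun_hasDeriv (v : ℝ) :
    HasDerivAt (fun v => v * (Real.exp v + 1) - 2 * (Real.exp v - 1))
      (v * Real.exp v - Real.exp v + 1) v := by
  have h1 : HasDerivAt (fun v : ℝ => Real.exp v) (Real.exp v) v := Real.hasDerivAt_exp v
  have h2 : HasDerivAt (fun v : ℝ => v * (Real.exp v + 1))
      (1 * (Real.exp v + 1) + v * Real.exp v) v :=
    (hasDerivAt_id v).mul (h1.add_const 1)
  have h3 : HasDerivAt (fun v : ℝ => 2 * (Real.exp v - 1)) (2 * Real.exp v) v := by
    simpa using ((h1.sub_const 1).const_mul 2)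
  exact (h2.sub h3).congr_deriv (by ring)

lemma deriv_key_nonneg (v : ℝ) : 0 ≤ v * Real.exp v - Real.exp v + 1 := by
  have h := Real.add_one_le_exp (-v)
  have hp := Real.exp_pos v
  have : Real.exp v * Real.exp (-v) = 1 := by
    rw [← Real.exp_add]; simp
  nlinarith [mul_le_mul_of_nonneg_left h hp.le]

lemma hfun_mono : Monotone (fun v => v * (Real.exp v + 1) - 2 * (Real.exp v - 1)) := by
  apply monotone_of_deriv_nonneg
  · exact fun v => (hfun_hasDeriv v).differentiableAt
  · intro v
    rw [(hfun_hasDeriv v).deriv]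
    exact deriv_key_nonneg v

lemma hfun_nonneg {v : ℝ} (hv : 0 ≤ v) : 0 ≤ v * (Real.exp v + 1) - 2 * (Real.exp v - 1) := by
  have := hfun_mono hv
  simpa using this

lemma hfun_nonpos {v : ℝ} (hv : v ≤ 0) : v * (Real.exp v + 1) - 2 * (Real.exp v - 1) ≤ 0 := by
  have := hfun_mono hv
  simpa using this

/-- supporting line at 0 : `-v/2 ≤ M v` for all `v`. -/
lemma Mfun_supp (v : ℝ) : -(1/2) * v ≤ Mfun v := by
  by_cases hv : v = 0
  · simp [hv, Mfun]
  rcases Ne.lt_or_gt hv with h | h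
  · rw [Mfun, if_neg hv]
    have hE := expm1_neg h
    rw [le_sub_iff_add_le, le_div_iff_of_neg hE]
    nlinarith [hfun_nonpos h.le]
  · rw [Mfun, if_neg hv]
    have hE := expm1_pos h
    rw [le_sub_iff_add_le, le_div_iff₀ hE]
    nlinarith [hfun_nonneg h.le]

noncomputable def M1 (v : ℝ) : ℝ :=
  ((Real.exp v - 1) - v * Real.exp v) / (Real.exp v - 1)^2

noncomputable def M2 (v : ℝ) : ℝ :=
  Real.exp v * (v * (Real.exp v + 1) - 2 * (Real.exp v - 1)) / (Real.exp v - 1)^3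

lemma Mfun_hasDeriv {v : ℝ} (hv : v ≠ 0) : HasDerivAt Mfun (M1 v) v := by
  have hE := expm1_ne hv
  have h1 : HasDerivAt (fun v : ℝ => Real.exp v - 1) (Real.exp v) v :=
    (Real.hasDerivAt_exp v).sub_const 1
  have h2 : HasDerivAt (fun v : ℝ => v / (Real.exp v - 1) - 1)
      ((1 * (Real.exp v - 1) - v * Real.exp v) / (Real.exp v - 1)^2) v :=
    ((hasDerivAt_id v).div h1 hE).sub_const 1
  have heq : Mfun =ᶠ[nhds v] fun v : ℝ => v / (Real.exp v - 1) - 1 := by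
    filter_upwards [isOpen_ne.mem_nhds hv] with w hw
    simp [Mfun, hw]
  refine (HasDerivAt.congr_of_eventuallyEq ?_ heq)
  exact h2.congr_deriv (by rw [M1]; ring_nf)

lemma M1_hasDeriv {v : ℝ} (hv : v ≠ 0) : HasDerivAt M1 (M2 v) v := by
  have hE := expm1_ne hv
  have hexp : HasDerivAt (fun v : ℝ => Real.exp v) (Real.exp v) v := Real.hasDerivAt_exp v
  have hnum : HasDerivAt (fun v : ℝ => (Real.exp v - 1) - v * Real.exp v)
      (Real.exp v - (1 * Real.exp v + v * Real.exp v)) v :=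
    (hexp.sub_const 1).sub ((hasDerivAt_id v).mul hexp)
  have hden : HasDerivAt (fun v : ℝ => (Real.exp v - 1)^2)
      (2 * (Real.exp v - 1) ^ 1 * Real.exp v) v := by
    exact (hexp.sub_const 1).pow 2
  have hden_ne : (Real.exp v - 1)^2 ≠ 0 := pow_ne_zero _ hE
  have h2 := hnum.div hden hden_ne
  refine HasDerivAt.congr_deriv (h2.congr_of_eventuallyEq ?_) ?_
  · filter_upwards with w; rw [M1]; rfl
  · rw [M2]
    field_simp
    ring

lemma M2_nonneg {v : ℝ} (hv : v ≠ 0) : 0 ≤ M2 v := by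
  rw [M2]
  rcases Ne.lt_or_gt hv with h | h
  · have hE := expm1_neg h
    have h3 : (Real.exp v - 1)^3 < 0 := Odd.pow_neg (by decide) hE
    exact div_nonneg_of_nonpos
      (by nlinarith [hfun_nonpos h.le, Real.exp_pos v]) h3.le
  · have hE := expm1_pos h
    have h3 : (0:ℝ) < (Real.exp v - 1)^3 := by positivity
    exact div_nonneg (by nlinarith [hfun_nonneg h.le, Real.exp_pos v]) h3.le

lemma Mfun_cont : Continuous Mfun := by
  rw [continuous_iff_continuousAt]
  intro v
  by_cases hv : v = 0
  · subst hv
    have key : ∀ w : ℝ, |w| ≤ 1/2 → ‖Mfun w‖ ≤ 2 * |w| := by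
      intro w hw
      by_cases hw0 : w = 0
      · simp [hw0, Mfun]
      have habs : |Real.exp w - 1 - w| ≤ w^2 :=
        Real.abs_exp_sub_one_sub_id_le (by linarith)
      have hlow : |w|/2 ≤ |Real.exp w - 1| := by
        rcases Ne.lt_or_gt hw0 with h | h
        · have hE := expm1_neg h
          rw [abs_of_neg hE, abs_of_neg h]
          have h1 : Real.exp w - 1 - w ≤ w^2 := (abs_le.1 habs).2
          nlinarith [abs_le.1 (abs_le.2 ⟨by linarith [neg_abs_le w], le_of_abs_le hw⟩), sq_abs w, abs_nonneg w, neg_abs_le w, le_abs_self w]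
        · have hE := expm1_pos h
          rw [abs_of_pos hE, abs_of_pos h]
          have := Real.add_one_le_exp w
          linarith
      have hEne : Real.exp w - 1 ≠ 0 := expm1_ne hw0
      have hEpos : 0 < |Real.exp w - 1| := abs_pos.2 hEne
      have hwpos : 0 < |w| := abs_pos.2 hw0
      have : Mfun w = -((Real.exp w - 1 - w) / (Real.exp w - 1)) := by
        rw [Mfun, if_neg hw0]; field_simp; ring
      rw [Real.norm_eq_abs, this, abs_neg, abs_div]
      calc |Real.exp w - 1 - w| / |Real.exp w - 1| ≤ w^2 / (|w|/2) :=
            div_le_div₀ (sq_nonneg w) habs (by positivity) hlow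
        _ = 2 * |w| := by
            field_simp; rw [← sq_abs]
    have hev : ∀ᶠ w in nhds (0:ℝ), ‖Mfun w‖ ≤ 2 * |w| := by
      have hb : ∀ᶠ w in nhds (0:ℝ), |w| ≤ 1/2 := by
        filter_upwards [Metric.ball_mem_nhds (0:ℝ) (by norm_num : (0:ℝ) < 1/2)] with w hw
        rw [Metric.mem_ball, Real.dist_eq, sub_zero] at hw
        linarith
      filter_upwards [hb] with w hw using key w hw
    have htend : Filter.Tendsto (fun w : ℝ => 2 * |w|) (nhds 0) (nhds 0) := by
      have h := (((continuous_const (y := (2:ℝ))).mul continuous_abs).tendsto (0:ℝ))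
      convert h using 2 <;> simp
    have := squeeze_zero_norm' hev htend
    unfold ContinuousAt
    rwa [Mfun_zero]
  · have heq : (fun w : ℝ => w / (Real.exp w - 1) - 1) =ᶠ[nhds v] Mfun := by
      filter_upwards [isOpen_ne.mem_nhds hv] with w hw
      simp [Mfun, hw]
    apply ContinuousAt.congr _ heq
    exact ((continuousAt_id.div (Real.continuous_exp.continuousAt.sub continuousAt_const)
      (expm1_ne hv)).sub continuousAt_const)

lemma Mfun_convexOn_Ici : ConvexOn ℝ (Set.Ici 0) Mfun := by
  apply convexOn_of_hasDerivWithinAt2_nonneg (convex_Ici 0) Mfun_cont.continuousOn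
    (f' := M1) (f'' := M2)
  · intro x hx
    rw [interior_Ici] at hx
    exact (Mfun_hasDeriv (ne_of_gt hx)).hasDerivWithinAt
  · intro x hx
    rw [interior_Ici] at hx
    exact (M1_hasDeriv (ne_of_gt hx)).hasDerivWithinAt
  · intro x hx
    rw [interior_Ici] at hx
    exact M2_nonneg (ne_of_gt hx)

lemma Mfun_convexOn_Iic : ConvexOn ℝ (Set.Iic 0) Mfun := by
  apply convexOn_of_hasDerivWithinAt2_nonneg (convex_Iic 0) Mfun_cont.continuousOn
    (f' := M1) (f'' := M2)
  · intro x hx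
    rw [interior_Iic] at hx
    exact (Mfun_hasDeriv (ne_of_lt hx)).hasDerivWithinAt
  · intro x hx
    rw [interior_Iic] at hx
    exact (M1_hasDeriv (ne_of_lt hx)).hasDerivWithinAt
  · intro x hx
    rw [interior_Iic] at hx
    exact M2_nonneg (ne_of_lt hx)

/-- glue two half-line convexities using a supporting line at 0. -/
lemma glue_convex {f : ℝ → ℝ} {c : ℝ} (h1 : ConvexOn ℝ (Set.Ici 0) f)
    (h2 : ConvexOn ℝ (Set.Iic 0) f) (h0 : f 0 = 0) (hl : ∀ v, c * v ≤ f v) :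
    ConvexOn ℝ Set.univ f := by
  have main : ∀ x y a b : ℝ, x < 0 → 0 < y → 0 ≤ a → 0 ≤ b → a + b = 1 →
      f (a * x + b * y) ≤ a * f x + b * f y := by
    intro x y a b hx hy ha hb hab
    set z := a * x + b * y with hz
    rcases le_or_gt 0 z with hz0 | hz0
    · -- z ≥ 0 : compare with combination of 0 and y on Ici 0
      set d := z / y with hd
      have hd0 : 0 ≤ d := div_nonneg hz0 hy.le
      have hd1 : d ≤ 1 := by
        rw [hd, div_le_one hy]
        nlinarith [mul_nonpos_of_nonneg_of_nonpos ha hx.le, mul_nonneg ha hy.le]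
      have hzy : (1 - d) * (0:ℝ) + d * y = z := by
        rw [hd]; field_simp [hd, hy.ne']; ring
      have hfz : f z ≤ d * f y := by
        have := h1.2 (Set.self_mem_Ici (a := (0:ℝ))) (Set.mem_Ici.2 hy.le)
          (by linarith : (0:ℝ) ≤ 1 - d) hd0 (by ring)
        simp only [smul_eq_mul] at this
        rw [hzy] at this
        simpa [h0] using this
      have hbd : (b - d) * y = -(a * x) := by
        have hdy : d * y = z := by rw [hd]; field_simp [hd, hy.ne']
        linear_combination (-1) * hdy + (-1) * hz
      have hbd0 : 0 ≤ b - d := by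
        by_contra hcon
        push_neg at hcon
        nlinarith [hbd, mul_pos (neg_pos.2 (sub_neg.2 hcon)) hy,
          mul_nonpos_of_nonneg_of_nonpos ha hx.le]
      have hc : c * ((b - d) * y) = c * (-(a * x)) := by rw [hbd]
      calc f z ≤ d * f y := hfz
        _ ≤ a * f x + b * f y := by
            nlinarith [mul_le_mul_of_nonneg_left (hl x) ha,
              mul_le_mul_of_nonneg_left (hl y) hbd0, hc]
    · -- z < 0 : compare with combination of x and 0 on Iic 0
      set d := z / x with hd
      have hd0 : 0 ≤ d := div_nonneg_of_nonpos hz0.le hx.le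
      have hd1 : d ≤ 1 := by
        rw [hd, div_le_one_iff]
        exact Or.inr (Or.inr ⟨hx, by nlinarith [mul_nonneg hb hy.le,
          mul_nonpos_of_nonpos_of_nonneg hx.le (show 0 ≤ 1 - a by linarith)]⟩)
      have hzx : d * x + (1 - d) * (0:ℝ) = z := by
        rw [hd]; field_simp [hd, hx.ne]; ring
      have hfz : f z ≤ d * f x := by
        have := h2.2 (Set.mem_Iic.2 hx.le) (Set.self_mem_Iic (a := (0:ℝ)))
          hd0 (by linarith : (0:ℝ) ≤ 1 - d) (by ring)
        simp only [smul_eq_mul] at this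
        rw [hzx] at this
        simpa [h0] using this
      have had : (a - d) * x = -(b * y) := by
        have hdx : d * x = z := by rw [hd]; field_simp [hd, hx.ne]
        linear_combination (-1) * hdx + (-1) * hz
      have had0 : 0 ≤ a - d := by
        by_contra hcon
        push_neg at hcon
        nlinarith [had, mul_pos_of_neg_of_neg (sub_neg.2 hcon) hx,
          mul_nonneg hb hy.le]
      have hc : c * ((a - d) * x) = c * (-(b * y)) := by rw [had]
      calc f z ≤ d * f x := hfz
        _ ≤ a * f x + b * f y := by
            nlinarith [mul_le_mul_of_nonneg_left (hl y) hb,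
              mul_le_mul_of_nonneg_left (hl x) had0, hc]
  refine ⟨convex_univ, fun x _ y _ a b ha hb hab => ?_⟩
  simp only [smul_eq_mul]
  rcases le_or_gt 0 x with hx | hx <;> rcases le_or_gt 0 y with hy | hy
  · simpa using h1.2 (Set.mem_Ici.2 hx) (Set.mem_Ici.2 hy) ha hb hab
  · rcases eq_or_lt_of_le hx with hx' | hx'
    · -- x = 0 < ... y < 0 : both in Iic
      have := h2.2 (Set.mem_Iic.2 hx'.symm.le) (Set.mem_Iic.2 hy.le) ha hb hab
      simpa using this
    · have := main y x b a hy hx' hb ha (by linarith)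
      calc f (a * x + b * y) = f (b * y + a * x) := by ring_nf
        _ ≤ b * f y + a * f x := this
        _ = a * f x + b * f y := by ring
  · rcases eq_or_lt_of_le hy with hy' | hy'
    · have := h2.2 (Set.mem_Iic.2 hx.le) (Set.mem_Iic.2 hy'.symm.le) ha hb hab
      simpa using this
    · exact main x y a b hx hy' ha hb hab
  · simpa using h2.2 (Set.mem_Iic.2 hx.le) (Set.mem_Iic.2 hy.le) ha hb hab

lemma Mfun_convexOn : ConvexOn ℝ Set.univ Mfun :=
  glue_convex Mfun_convexOn_Ici Mfun_convexOn_Iic Mfun_zero Mfun_supp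

lemma contOn_integrand {p q : ℝ} (hp : 0 < p) (hq : 0 < q) (r : ℝ) :
    ContinuousOn (fun u : ℝ => Mfun (u * r) / u) (Set.uIcc p q) := by
  apply ContinuousOn.div
  · exact (Mfun_cont.comp (continuous_id.mul continuous_const)).continuousOn
  · exact continuousOn_id
  · intro u hu
    have : min p q ≤ u := hu.1
    have : 0 < u := lt_of_lt_of_le (lt_min hp hq) this
    exact this.ne'

lemma int_convex {p q : ℝ} (hp : 0 < p) (hpq : p ≤ q) :
    ConvexOn ℝ Set.univ (fun t => ∫ u in p..q, Mfun (u * t) / u) := by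
  have hq : 0 < q := lt_of_lt_of_le hp hpq
  have ii : ∀ r : ℝ, IntervalIntegrable (fun u => Mfun (u * r) / u) MeasureTheory.volume p q :=
    fun r => (contOn_integrand hp hq r).intervalIntegrable
  refine ⟨convex_univ, fun x _ y _ a b ha hb hab => ?_⟩
  simp only [smul_eq_mul]
  have iiR : IntervalIntegrable
      (fun u => a * (Mfun (u * x) / u) + b * (Mfun (u * y) / u)) MeasureTheory.volume p q :=
    ((ii x).const_mul a).add ((ii y).const_mul b)
  have hmono : (∫ u in p..q, Mfun (u * (a * x + b * y)) / u)
      ≤ ∫ u in p..q, (a * (Mfun (u * x) / u) + b * (Mfun (u * y) / u)) := by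
    apply intervalIntegral.integral_mono_on hpq (ii _) iiR
    intro u hu
    have hu0 : 0 < u := lt_of_lt_of_le hp hu.1
    have hM := Mfun_convexOn.2 (Set.mem_univ (u * x)) (Set.mem_univ (u * y)) ha hb hab
    simp only [smul_eq_mul] at hM
    have harg : u * (a * x + b * y) = a * (u * x) + b * (u * y) := by ring
    rw [harg]
    calc Mfun (a * (u * x) + b * (u * y)) / u
        ≤ (a * Mfun (u * x) + b * Mfun (u * y)) / u := by
          exact div_le_div_of_nonneg_right hM hu0.le
      _ = a * (Mfun (u * x) / u) + b * (Mfun (u * y) / u) := by ring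
  calc (∫ u in p..q, Mfun (u * (a * x + b * y)) / u)
      ≤ ∫ u in p..q, (a * (Mfun (u * x) / u) + b * (Mfun (u * y) / u)) := hmono
    _ = a * (∫ u in p..q, Mfun (u * x) / u) + b * (∫ u in p..q, Mfun (u * y) / u) := by
        rw [intervalIntegral.integral_add ((ii x).const_mul a) ((ii y).const_mul b),
          intervalIntegral.integral_const_mul, intervalIntegral.integral_const_mul]

lemma logQ_eq (α β : ℝ) (hs : 0 < β - α) (t : ℝ) :
    Real.log (if t = 0 then β - α
        else (Real.exp (-α*t) - Real.exp (-β*t)) / (1 - Real.exp (-t)))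
      = (-α * t + Real.log (β - α)) + ∫ u in (1:ℝ)..(β - α), Mfun (u * t) / u := by
  set s := β - α with hsdef
  by_cases ht : t = 0
  · subst ht
    have : (fun u : ℝ => Mfun (u * 0) / u) = fun _ : ℝ => (0:ℝ) := by
      funext u; simp [Mfun]
    simp [Mfun_zero]
  · rw [if_neg ht]
    -- FTC on u ↦ log ((exp (u t) - 1)/(u t))
    have hmin : 0 < min 1 s := lt_min one_pos hs
    have hderiv : ∀ u ∈ Set.uIcc (1:ℝ) s,
        HasDerivAt (fun u : ℝ => Real.log ((Real.exp (u * t) - 1) / (u * t)))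
          (t + Mfun (u * t) / u) u := by
      intro u hu
      have hu0 : 0 < u := lt_of_lt_of_le hmin hu.1
      have hut : u * t ≠ 0 := mul_ne_zero hu0.ne' ht
      have hE : Real.exp (u * t) - 1 ≠ 0 := expm1_ne hut
      have h1 : HasDerivAt (fun u : ℝ => u * t) t u := hasDerivAt_mul_const t
      have h2 : HasDerivAt (fun u : ℝ => Real.exp (u * t)) (Real.exp (u * t) * t) u :=
        h1.exp
      have h3 : HasDerivAt (fun u : ℝ => Real.exp (u * t) - 1) (Real.exp (u * t) * t) u :=
        h2.sub_const 1
      have h4 := h3.div h1 hut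
      have hq : (Real.exp (u * t) - 1) / (u * t) ≠ 0 := div_ne_zero hE hut
      have h5 := h4.log hq
      refine HasDerivAt.congr_deriv h5 ?_
      rw [Mfun, if_neg hut]
      simp only [Pi.div_apply]
      field_simp
      ring
    have hint : IntervalIntegrable (fun u : ℝ => t + Mfun (u * t) / u)
        MeasureTheory.volume 1 s := by
      apply ContinuousOn.intervalIntegrable
      exact continuousOn_const.add (contOn_integrand one_pos hs t)
    have ftc := intervalIntegral.integral_eq_sub_of_hasDerivAt hderiv hint
    have hsplit : (∫ u in (1:ℝ)..s, (t + Mfun (u * t) / u))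
        = (s - 1) * t + ∫ u in (1:ℝ)..s, Mfun (u * t) / u := by
      rw [intervalIntegral.integral_add intervalIntegrable_const
        ((contOn_integrand one_pos hs t).intervalIntegrable)]
      simp [smul_eq_mul]
    have hIeq : (∫ u in (1:ℝ)..s, Mfun (u * t) / u)
        = Real.log ((Real.exp (s * t) - 1) / (s * t))
          - Real.log ((Real.exp t - 1) / t) - (s - 1) * t := by
      rw [hsplit] at ftc
      have : Real.log ((Real.exp (1 * t) - 1) / (1 * t))
          = Real.log ((Real.exp t - 1) / t) := by norm_num
      rw [this] at ftc
      linarith [ftc]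
    rw [hIeq]
    -- now the logarithmic algebra
    have hA : 0 < (Real.exp (s * t) - 1) / (s * t) :=
      expm1_div_pos (mul_ne_zero hs.ne' ht)
    have hB : 0 < (Real.exp t - 1) / t := expm1_div_pos ht
    have argeq : (Real.exp (-α*t) - Real.exp (-β*t)) / (1 - Real.exp (-t))
        = Real.exp (-α * t - (s - 1) * t)
          * (s * (((Real.exp (s * t) - 1) / (s * t)) / ((Real.exp t - 1) / t))) := by
      have hβ : β = α + s := by rw [hsdef]; ring
      have e1 : Real.exp (-(α + s) * t) = Real.exp (-α * t) * (Real.exp (s * t))⁻¹ := by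
        rw [← Real.exp_neg, ← Real.exp_add]; ring_nf
      have e2 : Real.exp (-t) = (Real.exp t)⁻¹ := Real.exp_neg t
      have e3 : Real.exp (-α * t - (s - 1) * t)
          = Real.exp (-α * t) * (Real.exp (s * t))⁻¹ * Real.exp t := by
        rw [← Real.exp_neg, ← Real.exp_add, ← Real.exp_add]; ring_nf
      rw [hβ, e1, e2, e3]
      have hE1 : Real.exp t - 1 ≠ 0 := expm1_ne ht
      have hEt : Real.exp t ≠ 0 := (Real.exp_pos t).ne'
      have hEst : Real.exp (s * t) ≠ 0 := (Real.exp_pos (s * t)).ne'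
      have hden : 1 - Real.exp (-t) ≠ 0 := by
        rw [e2]
        intro h
        apply hE1
        field_simp at h
        linarith
      field_simp
    rw [argeq, Real.log_mul (Real.exp_ne_zero _) (by positivity), Real.log_exp,
      Real.log_mul hs.ne' (by positivity), Real.log_div hA.ne' hB.ne']
    ring

lemma affine_convexOn (c d : ℝ) : ConvexOn ℝ Set.univ (fun t : ℝ => c * t + d) := by
  refine ⟨convex_univ, fun x _ y _ a b ha hb hab => ?_⟩
  simp only [smul_eq_mul]
  have : c * (a * x + b * y) + d = a * (c * x + d) + b * (c * y + d) := by
    linear_combination (-d) * hab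
  linarith [this]

lemma affine_concaveOn (c d : ℝ) : ConcaveOn ℝ Set.univ (fun t : ℝ => c * t + d) := by
  refine ⟨convex_univ, fun x _ y _ a b ha hb hab => ?_⟩
  simp only [smul_eq_mul]
  have : c * (a * x + b * y) + d = a * (c * x + d) + b * (c * y + d) := by
    linear_combination (-d) * hab
  linarith [this]

theorem stmt4 (α β : ℝ) (hab : α ≠ β) (h01 : (α, β) ≠ (0, 1)) (h10 : (α, β) ≠ (1, 0)) :
    (β - α > 1 → ConvexOn ℝ Set.univ (fun t => Real.log ((fun t : ℝ => if t = 0 then β - α else (Real.exp (-α*t) - Real.exp (-β*t)) / (1 - Real.exp (-t))) t))) ∧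
    (0 < β - α ∧ β - α < 1 → ConcaveOn ℝ Set.univ (fun t => Real.log ((fun t : ℝ => if t = 0 then β - α else (Real.exp (-α*t) - Real.exp (-β*t)) / (1 - Real.exp (-t))) t))) := by
  constructor
  · intro h1
    have hs : 0 < β - α := by linarith
    have heq : (fun t => Real.log ((fun t : ℝ => if t = 0 then β - α
          else (Real.exp (-α*t) - Real.exp (-β*t)) / (1 - Real.exp (-t))) t))
        = fun t => (-α * t + Real.log (β - α)) + ∫ u in (1:ℝ)..(β - α), Mfun (u * t) / u :=
      funext fun t => logQ_eq α β hs t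
    rw [heq]
    exact (affine_convexOn (-α) (Real.log (β - α))).add (int_convex one_pos (by linarith))
  · rintro ⟨hs, hlt⟩
    have heq : (fun t => Real.log ((fun t : ℝ => if t = 0 then β - α
          else (Real.exp (-α*t) - Real.exp (-β*t)) / (1 - Real.exp (-t))) t))
        = fun t => (-α * t + Real.log (β - α)) + ∫ u in (1:ℝ)..(β - α), Mfun (u * t) / u :=
      funext fun t => logQ_eq α β hs t
    rw [heq]
    have hsym : (fun t => ∫ u in (1:ℝ)..(β - α), Mfun (u * t) / u)
        = fun t => -(∫ u in (β - α)..(1:ℝ), Mfun (u * t) / u) :=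
      funext fun t => intervalIntegral.integral_symm _ _
    have hconc : ConcaveOn ℝ Set.univ (fun t => ∫ u in (1:ℝ)..(β - α), Mfun (u * t) / u) := by
      rw [hsym]
      exact neg_concaveOn_iff.2 (int_convex hs hlt.le)
    exact (affine_concaveOn (-α) (Real.log (β - α))).add hconc
end

section
/- If 0 < β - α < 1, then the third derivative of ln Q(t) is nonnegative on (0, ∞) and nonpositive on (-∞, 0), where Q(t) = (e^{-αt} - e^{-βt})/(1 - e^{-t}) for t ≠ 0 and Q(0) = β - α (i.e., Q is 3-log-convex on (0,∞) and 3-log-concave on (-∞,0)). -/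
open Real Set


lemma auxF2 {x : ℝ} (hx : 0 ≤ x) : Real.sinh x ≤ x * Real.cosh x := by
  have mono : MonotoneOn (fun s : ℝ => s * Real.cosh s - Real.sinh s) (Ici 0) := by
    have hd : ∀ s : ℝ, HasDerivAt (fun s : ℝ => s * Real.cosh s - Real.sinh s) (s * Real.sinh s) s := by
      intro s
      have h := ((hasDerivAt_id s).mul (Real.hasDerivAt_cosh s)).sub (Real.hasDerivAt_sinh s)
      convert h using 1 <;> first | rfl | (simp [id_eq] <;> ring)
    refine monotoneOn_of_deriv_nonneg (convex_Ici 0) ?_ ?_ ?_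
    · exact fun s _ => ((hd s).continuousAt).continuousWithinAt
    · exact fun s _ => ((hd s).differentiableAt).differentiableWithinAt
    · intro s hs
      rw [interior_Ici] at hs
      rw [(hd s).deriv]
      exact mul_nonneg (le_of_lt hs) (Real.sinh_nonneg_iff.mpr hs.le)
  have := mono (self_mem_Ici) hx hx
  simp at this
  linarith

lemma auxF1 {x : ℝ} (hx : 0 ≤ x) : 2 * Real.cosh x ≤ x * Real.sinh x + 2 := by
  have mono : MonotoneOn (fun s : ℝ => s * Real.sinh s + 2 - 2 * Real.cosh s) (Ici 0) := by
    have hd : ∀ s : ℝ, HasDerivAt (fun s : ℝ => s * Real.sinh s + 2 - 2 * Real.cosh s) (s * Real.cosh s - Real.sinh s) s := by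
      intro s
      have h := (((hasDerivAt_id s).mul (Real.hasDerivAt_sinh s)).add_const 2).sub ((Real.hasDerivAt_cosh s).const_mul 2)
      convert h using 1 <;> first | rfl | (simp [id_eq] <;> ring)
    refine monotoneOn_of_deriv_nonneg (convex_Ici 0) ?_ ?_ ?_
    · exact fun s _ => ((hd s).continuousAt).continuousWithinAt
    · exact fun s _ => ((hd s).differentiableAt).differentiableWithinAt
    · intro s hs
      rw [interior_Ici] at hs
      rw [(hd s).deriv]
      have := auxF2 (le_of_lt hs)
      linarith
  have := mono (self_mem_Ici) hx hx
  simp [Real.cosh_zero] at this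
  linarith

lemma auxF {x : ℝ} (hx : 0 ≤ x) : 3 * Real.sinh x ≤ x * Real.cosh x + 2 * x := by
  have mono : MonotoneOn (fun s : ℝ => s * Real.cosh s + 2 * s - 3 * Real.sinh s) (Ici 0) := by
    have hd : ∀ s : ℝ, HasDerivAt (fun s : ℝ => s * Real.cosh s + 2 * s - 3 * Real.sinh s) (s * Real.sinh s + 2 - 2 * Real.cosh s) s := by
      intro s
      have h := (((hasDerivAt_id s).mul (Real.hasDerivAt_cosh s)).add ((hasDerivAt_id s).const_mul 2)).sub ((Real.hasDerivAt_sinh s).const_mul 3)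
      convert h using 1 <;> first | rfl | (simp [id_eq] <;> ring)
    refine monotoneOn_of_deriv_nonneg (convex_Ici 0) ?_ ?_ ?_
    · exact fun s _ => ((hd s).continuousAt).continuousWithinAt
    · exact fun s _ => ((hd s).differentiableAt).differentiableWithinAt
    · intro s hs
      rw [interior_Ici] at hs
      rw [(hd s).deriv]
      have := auxF1 (le_of_lt hs)
      linarith
  have := mono (self_mem_Ici) hx hx
  simp at this
  linarith

lemma auxP {x : ℝ} (hx : 0 ≤ x) :
    0 ≤ x * Real.exp x ^ 2 + 4 * x * Real.exp x + x - 3 * Real.exp x ^ 2 + 3 := by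
  have hF := auxF hx
  have key : x * Real.exp x ^ 2 + 4 * x * Real.exp x + x - 3 * Real.exp x ^ 2 + 3
      = 2 * Real.exp x * (x * Real.cosh x + 2 * x - 3 * Real.sinh x) := by
    rw [Real.cosh_eq, Real.sinh_eq, Real.exp_neg]
    field_simp
    ring
  rw [key]
  have : (0:ℝ) ≤ x * Real.cosh x + 2 * x - 3 * Real.sinh x := by linarith
  positivity


noncomputable def wfun (s : ℝ) : ℝ := s ^ 3 * Real.exp s * (Real.exp s + 1) / (Real.exp s - 1) ^ 3

lemma w_hasDeriv {x : ℝ} (hx : 0 < x) :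
    HasDerivAt wfun
      (((3 * x ^ 2 * (Real.exp x * (Real.exp x + 1)) + x ^ 3 * (Real.exp x * (Real.exp x + 1) + Real.exp x * Real.exp x)) * (Real.exp x - 1) ^ 3
        - x ^ 3 * Real.exp x * (Real.exp x + 1) * (3 * (Real.exp x - 1) ^ 2 * Real.exp x)) / ((Real.exp x - 1) ^ 3) ^ 2) x := by
  have hne : Real.exp x - 1 ≠ 0 := by
    have : 1 < Real.exp x := by
      rw [← Real.exp_zero]; exact Real.exp_lt_exp.mpr hx
    linarith
  have hnum : HasDerivAt (fun s : ℝ => s ^ 3 * Real.exp s * (Real.exp s + 1))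
      (3 * x ^ 2 * (Real.exp x * (Real.exp x + 1)) + x ^ 3 * (Real.exp x * (Real.exp x + 1) + Real.exp x * Real.exp x)) x := by
    have h1 : HasDerivAt (fun s : ℝ => Real.exp s * (Real.exp s + 1))
        (Real.exp x * (Real.exp x + 1) + Real.exp x * Real.exp x) x := by
      have := (Real.hasDerivAt_exp x).mul ((Real.hasDerivAt_exp x).add_const 1)
      convert this using 1 <;> first | rfl | ring
    have h2 := (hasDerivAt_pow 3 x).mul h1
    have : (fun s : ℝ => s ^ 3 * Real.exp s * (Real.exp s + 1)) = fun s : ℝ => s ^ 3 * (Real.exp s * (Real.exp s + 1)) := by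
      funext s; ring
    rw [this]
    convert h2 using 1 <;> first | rfl | (push_cast; ring)
  have hden : HasDerivAt (fun s : ℝ => (Real.exp s - 1) ^ 3) (3 * (Real.exp x - 1) ^ 2 * Real.exp x) x := by
    have := ((Real.hasDerivAt_exp x).sub_const 1).pow 3
    convert this using 1 <;> first | rfl | (push_cast; ring)
  have := hnum.div hden (pow_ne_zero 3 hne)
  exact this

lemma w_deriv_nonpos {x : ℝ} (hx : 0 < x) : deriv wfun x ≤ 0 := by
  rw [(w_hasDeriv hx).deriv]
  have hgt : 1 < Real.exp x := by rw [← Real.exp_zero]; exact Real.exp_lt_exp.mpr hx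
  set E := Real.exp x with hE
  have hid : (3 * x ^ 2 * (E * (E + 1)) + x ^ 3 * (E * (E + 1) + E * E)) * (E - 1) ^ 3
        - x ^ 3 * E * (E + 1) * (3 * (E - 1) ^ 2 * E)
      = -((E - 1) ^ 2 * E * x ^ 2 * (x * E ^ 2 + 4 * x * E + x - 3 * E ^ 2 + 3)) := by ring
  rw [hid]
  apply div_nonpos_of_nonpos_of_nonneg
  · have hP := auxP hx.le
    have hEpos : 0 < E := Real.exp_pos x
    have : 0 ≤ (E - 1) ^ 2 * E * x ^ 2 * (x * E ^ 2 + 4 * x * E + x - 3 * E ^ 2 + 3) := by positivity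
    linarith
  · positivity

lemma w_antitone : AntitoneOn wfun (Ioi 0) := by
  refine antitoneOn_of_deriv_nonpos (convex_Ioi 0) ?_ ?_ ?_
  · exact fun s hs => ((w_hasDeriv hs).continuousAt).continuousWithinAt
  · rw [interior_Ioi]; exact fun s hs => ((w_hasDeriv hs).differentiableAt).differentiableWithinAt
  · rw [interior_Ioi]; exact fun s hs => w_deriv_nonpos hs

lemma keyIneq {γ t : ℝ} (hγ0 : 0 < γ) (hγ1 : γ < 1) (ht : 0 < t) :
    Real.exp t * (Real.exp t + 1) / (Real.exp t - 1) ^ 3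
      ≤ γ ^ 3 * Real.exp (γ * t) * (Real.exp (γ * t) + 1) / (Real.exp (γ * t) - 1) ^ 3 := by
  have hγt : 0 < γ * t := mul_pos hγ0 ht
  have hlt : γ * t < t := by nlinarith
  have hw := w_antitone (mem_Ioi.mpr hγt) (mem_Ioi.mpr ht) hlt.le
  have ht3 : (0:ℝ) < t ^ 3 := by positivity
  have hgoal : t ^ 3 * (Real.exp t * (Real.exp t + 1) / (Real.exp t - 1) ^ 3)
      ≤ t ^ 3 * (γ ^ 3 * Real.exp (γ * t) * (Real.exp (γ * t) + 1) / (Real.exp (γ * t) - 1) ^ 3) :=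
    calc t ^ 3 * (Real.exp t * (Real.exp t + 1) / (Real.exp t - 1) ^ 3) = wfun t := by
          unfold wfun; ring
      _ ≤ wfun (γ * t) := hw
      _ = t ^ 3 * (γ ^ 3 * Real.exp (γ * t) * (Real.exp (γ * t) + 1) / (Real.exp (γ * t) - 1) ^ 3) := by
          unfold wfun; ring
  exact le_of_mul_le_mul_left hgoal ht3


lemma dlog1 {c x : ℝ} (h : c * x ≠ 0) :
    HasDerivAt (fun x : ℝ => Real.log (1 - Real.exp (-(c * x)))) (c / (Real.exp (c * x) - 1)) x := by
  have hne1 : Real.exp (-(c * x)) ≠ 1 := by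
    rw [Ne, Real.exp_eq_one_iff]; simpa using h
  have hne : 1 - Real.exp (-(c * x)) ≠ 0 := by
    intro hc; apply hne1; linarith
  have hinner : HasDerivAt (fun x : ℝ => 1 - Real.exp (-(c * x))) (c * Real.exp (-(c * x))) x := by
    have h1 : HasDerivAt (fun x : ℝ => -(c * x)) (-c) x := by
      exact (((hasDerivAt_id x).const_mul c).neg).congr_deriv (by ring)
    have := (Real.hasDerivAt_exp (-(c * x))).comp x h1
    have h2 := this.const_sub 1
    convert h2 using 1 <;> first | rfl | ring
  have := (Real.hasDerivAt_log hne).comp x hinner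
  convert this using 1 <;> first | rfl | skip
  rw [Real.exp_neg]
  have hE : Real.exp (c * x) ≠ 0 := Real.exp_ne_zero _
  have hEne1 : Real.exp (c * x) - 1 ≠ 0 := by
    intro hc
    apply hne1
    rw [Real.exp_neg]
    rw [show Real.exp (c*x) = 1 by linarith]
    norm_num
  field_simp
lemma dlog2 {c x : ℝ} (h : Real.exp (c * x) ≠ 1) :
    HasDerivAt (fun x : ℝ => c / (Real.exp (c * x) - 1))
      (-(c ^ 2 * Real.exp (c * x) / (Real.exp (c * x) - 1) ^ 2)) x := by
  have hne : Real.exp (c * x) - 1 ≠ 0 := sub_ne_zero.mpr h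
  have hden : HasDerivAt (fun x : ℝ => Real.exp (c * x) - 1) (Real.exp (c * x) * c) x := by
    have h1 : HasDerivAt (fun x : ℝ => c * x) c x := by simpa using (hasDerivAt_id x).const_mul c
    exact ((Real.hasDerivAt_exp (c * x)).comp x h1).sub_const 1
  have := (hasDerivAt_const x c).div hden hne
  convert this using 1 <;> first | rfl | skip
  field_simp
  ring
lemma dlog3 {c x : ℝ} (h : Real.exp (c * x) ≠ 1) :
    HasDerivAt (fun x : ℝ => -(c ^ 2 * Real.exp (c * x) / (Real.exp (c * x) - 1) ^ 2))
      (c ^ 3 * Real.exp (c * x) * (Real.exp (c * x) + 1) / (Real.exp (c * x) - 1) ^ 3) x := by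
  have hne : Real.exp (c * x) - 1 ≠ 0 := sub_ne_zero.mpr h
  have h1 : HasDerivAt (fun x : ℝ => c * x) c x := by simpa using (hasDerivAt_id x).const_mul c
  have hexp := (Real.hasDerivAt_exp (c * x)).comp x h1
  have hnum : HasDerivAt (fun x : ℝ => c ^ 2 * Real.exp (c * x)) (c ^ 2 * (Real.exp (c * x) * c)) x :=
    hexp.const_mul (c ^ 2)
  have hden : HasDerivAt (fun x : ℝ => (Real.exp (c * x) - 1) ^ 2)
      (2 * (Real.exp (c * x) - 1) ^ 1 * (Real.exp (c * x) * c)) x := by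
    have := (hexp.sub_const 1).pow 2
    convert this using 1 <;> first | rfl | (push_cast; ring)
  have := (hnum.div hden (pow_ne_zero 2 hne)).neg
  convert this using 1 <;> first | rfl | skip
  field_simp
  ring


lemma iter3 (α β : ℝ) (h0 : 0 < β - α) {t : ℝ} (ht : t ≠ 0) :
    iteratedDeriv 3 (fun t => Real.log ((fun t : ℝ => if t = 0 then β - α else (Real.exp (-α*t) - Real.exp (-β*t)) / (1 - Real.exp (-t))) t)) t
    = (β-α)^3 * Real.exp ((β-α)*t) * (Real.exp ((β-α)*t)+1) / (Real.exp ((β-α)*t)-1)^3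
      - Real.exp t * (Real.exp t + 1) / (Real.exp t - 1)^3 := by
  set γ := β - α with hγdef
  set f : ℝ → ℝ := fun t => Real.log ((fun t : ℝ => if t = 0 then β - α else (Real.exp (-α*t) - Real.exp (-β*t)) / (1 - Real.exp (-t))) t) with hf
  set U : Set ℝ := {x | x ≠ 0} with hUdef
  have hU : IsOpen U := isOpen_ne
  have htU : t ∈ U := ht
  -- nonvanishing facts
  have hexp1 : ∀ {c x : ℝ}, c ≠ 0 → x ∈ U → Real.exp (c * x) ≠ 1 := by
    intro c x hc hx
    rw [Ne, Real.exp_eq_one_iff]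
    exact mul_ne_zero hc hx
  have hexpn1 : ∀ {c x : ℝ}, c ≠ 0 → x ∈ U → 1 - Real.exp (-(c * x)) ≠ 0 := by
    intro c x hc hx hzero
    have : Real.exp (-(c * x)) = 1 := by linarith
    rw [Real.exp_eq_one_iff] at this
    exact (mul_ne_zero hc hx) (neg_eq_zero.mp this)
  -- the smooth local representation
  set G : ℝ → ℝ := fun x => -α * x + Real.log (1 - Real.exp (-(γ * x))) - Real.log (1 - Real.exp (-(1 * x))) with hG
  have hfG : EqOn f G U := by
    intro x hx
    have hx0 : x ≠ 0 := hx
    have hsplit : Real.exp (-α * x) - Real.exp (-β * x)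
        = Real.exp (-α * x) * (1 - Real.exp (-(γ * x))) := by
      rw [mul_sub, mul_one, ← Real.exp_add]
      have : -α * x + -(γ * x) = -β * x := by rw [hγdef]; ring
      rw [this]
    have hB := hexpn1 (c := γ) (by linarith) hx
    have hC : 1 - Real.exp (-(1 * x)) ≠ 0 := hexpn1 one_ne_zero hx
    have hA : Real.exp (-α * x) ≠ 0 := Real.exp_ne_zero _
    simp only [hf, if_neg hx0]
    rw [hsplit, hG]
    have hx1 : -x = -(1 * x) := by ring
    rw [hx1, Real.log_div (mul_ne_zero hA hB) hC, Real.log_mul hA hB, Real.log_exp]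
    try ring
  -- first derivative
  set G1 : ℝ → ℝ := fun x => -α + γ / (Real.exp (γ * x) - 1) - 1 / (Real.exp (1 * x) - 1) with hG1
  have hd1 : ∀ x ∈ U, deriv f x = G1 x := by
    intro x hx
    have heq : f =ᶠ[nhds x] G := Filter.eventuallyEq_of_mem (hU.mem_nhds hx) hfG
    rw [heq.deriv_eq]
    have hA : HasDerivAt (fun x : ℝ => -α * x) (-α) x := by
      simpa using (hasDerivAt_id x).const_mul (-α)
    have h := (hA.add (dlog1 (mul_ne_zero (by linarith : γ ≠ 0) hx))).sub
      (dlog1 (mul_ne_zero one_ne_zero hx))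
    exact h.deriv
  -- second derivative
  set G2 : ℝ → ℝ := fun x => -(γ ^ 2 * Real.exp (γ * x) / (Real.exp (γ * x) - 1) ^ 2)
      - -(1 ^ 2 * Real.exp (1 * x) / (Real.exp (1 * x) - 1) ^ 2) with hG2
  have hd2 : ∀ x ∈ U, deriv (deriv f) x = G2 x := by
    intro x hx
    have heq : deriv f =ᶠ[nhds x] G1 := Filter.eventuallyEq_of_mem (hU.mem_nhds hx) hd1
    rw [heq.deriv_eq]
    have h := (((dlog2 (hexp1 (by linarith : γ ≠ 0) hx)).const_add (-α)).sub
      (dlog2 (hexp1 one_ne_zero hx)))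
    exact h.deriv
  -- third derivative
  have hd3 : deriv (deriv (deriv f)) t
      = γ ^ 3 * Real.exp (γ * t) * (Real.exp (γ * t) + 1) / (Real.exp (γ * t) - 1) ^ 3
        - 1 ^ 3 * Real.exp (1 * t) * (Real.exp (1 * t) + 1) / (Real.exp (1 * t) - 1) ^ 3 := by
    have heq : deriv (deriv f) =ᶠ[nhds t] G2 := Filter.eventuallyEq_of_mem (hU.mem_nhds htU) hd2
    rw [heq.deriv_eq]
    have h := ((dlog3 (hexp1 (by linarith : γ ≠ 0) htU)).sub
      (dlog3 (hexp1 one_ne_zero htU)))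
    exact h.deriv
  have : iteratedDeriv 3 f t = deriv (deriv (deriv f)) t := by
    rw [(by norm_num : (3:ℕ) = 2 + 1), iteratedDeriv_succ,
        (by norm_num : (2:ℕ) = 1 + 1), iteratedDeriv_succ, iteratedDeriv_one]
  rw [this, hd3]
  norm_num


lemma Dodd {u : ℝ} (hu : u ≠ 0) :
    Real.exp (-u) * (Real.exp (-u) + 1) / (Real.exp (-u) - 1) ^ 3
      = -(Real.exp u * (Real.exp u + 1) / (Real.exp u - 1) ^ 3) := by
  have hE : Real.exp u ≠ 0 := Real.exp_ne_zero u
  have hE1 : Real.exp u - 1 ≠ 0 := sub_ne_zero.mpr (by rwa [Ne, Real.exp_eq_one_iff])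
  have hE1' : Real.exp (-u) - 1 ≠ 0 :=
    sub_ne_zero.mpr (by rw [Ne, Real.exp_eq_one_iff]; simpa using hu)
  rw [← neg_div, div_eq_div_iff (pow_ne_zero 3 hE1') (pow_ne_zero 3 hE1)]
  rw [Real.exp_neg]
  field_simp
  ring

theorem stmt5 (α β : ℝ) (h0 : 0 < β - α) (h1 : β - α < 1) :
    (∀ t ∈ Set.Ioi (0:ℝ), 0 ≤ iteratedDeriv 3 (fun t => Real.log ((fun t : ℝ => if t = 0 then β - α else (Real.exp (-α*t) - Real.exp (-β*t)) / (1 - Real.exp (-t))) t)) t) ∧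
    (∀ t ∈ Set.Iio (0:ℝ), iteratedDeriv 3 (fun t => Real.log ((fun t : ℝ => if t = 0 then β - α else (Real.exp (-α*t) - Real.exp (-β*t)) / (1 - Real.exp (-t))) t)) t ≤ 0) := by
  constructor
  · intro t ht
    rw [Set.mem_Ioi] at ht
    rw [iter3 α β h0 ht.ne']
    have := keyIneq h0 h1 ht
    linarith
  · intro t ht
    rw [Set.mem_Iio] at ht
    rw [iter3 α β h0 ht.ne]
    set γ := β - α with hγdef
    have hs : 0 < -t := neg_pos.mpr ht
    have k := keyIneq h0 h1 hs
    have hrw : γ * -t = -(γ * t) := by ring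
    rw [hrw] at k
    have e1 := Dodd ht.ne
    have e2 := Dodd (mul_ne_zero (by linarith : γ ≠ 0) ht.ne)
    rw [e1] at k
    have e2' : Real.exp (-(γ * t)) * (Real.exp (-(γ * t)) + 1) / (Real.exp (-(γ * t)) - 1) ^ 3
        = -(Real.exp (γ * t) * (Real.exp (γ * t) + 1) / (Real.exp (γ * t) - 1) ^ 3) := e2
    have k2 : γ ^ 3 * Real.exp (-(γ * t)) * (Real.exp (-(γ * t)) + 1) / (Real.exp (-(γ * t)) - 1) ^ 3
        = γ ^ 3 * (Real.exp (-(γ * t)) * (Real.exp (-(γ * t)) + 1) / (Real.exp (-(γ * t)) - 1) ^ 3) := by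
      ring
    rw [k2, e2'] at k
    have h2 : γ ^ 3 * Real.exp (γ * t) * (Real.exp (γ * t) + 1) / (Real.exp (γ * t) - 1) ^ 3
        = -(γ ^ 3 * -(Real.exp (γ * t) * (Real.exp (γ * t) + 1) / (Real.exp (γ * t) - 1) ^ 3)) := by
      ring
    rw [h2]
    linarith [k]
end

section
/- If β - α > 1, then the third derivative of ln Q(t) is nonpositive on (0, ∞) and nonnegative on (-∞, 0), where Q(t) = (e^{-αt} - e^{-βt})/(1 - e^{-t}) for t ≠ 0 and Q(0) = β - α (i.e., Q is 3-log-concave on (0,∞) and 3-log-convex on (-∞,0)). -/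
open Real Set Filter

lemma nonneg_aux (f f' : ℝ → ℝ) (hd : ∀ x, HasDerivAt f (f' x) x) (h0 : f 0 = 0)
    (hf' : ∀ x, 0 ≤ x → 0 ≤ f' x) : ∀ x, 0 ≤ x → 0 ≤ f x := by
  intro x hx
  have hm : MonotoneOn f (Set.Ici 0) :=
    monotoneOn_of_deriv_nonneg (convex_Ici 0)
      (fun y _ => (hd y).continuousAt.continuousWithinAt)
      (fun y _ => (hd y).differentiableAt.differentiableWithinAt)
      (fun y hy => by
        rw [(hd y).deriv]
        exact hf' y (le_of_lt (by simpa using hy)))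
  have := hm (Set.self_mem_Ici) hx hx
  rwa [h0] at this

lemma key_ineq : ∀ s : ℝ, 0 ≤ s → 3 * ((Real.exp s)^2 - 1) ≤ s * ((Real.exp s)^2 + 4 * Real.exp s + 1) := by
  have hG1 : ∀ x : ℝ, 0 ≤ x → 0 ≤ 1 - Real.exp x + 2*x*Real.exp x := by
    apply nonneg_aux _ (fun x => Real.exp x * (1 + 2*x))
    · intro x
      have he := Real.hasDerivAt_exp x
      have := ((hasDerivAt_const x (1:ℝ)).sub he).add (((hasDerivAt_id x).const_mul 2).mul he)
      refine this.congr_deriv ?_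
      simp; ring
    · simp
    · intro x hx
      have := Real.exp_pos x
      nlinarith
  have hG : ∀ x : ℝ, 0 ≤ x → 0 ≤ 2*x*Real.exp x + x - 3*Real.exp x + 3 := by
    apply nonneg_aux _ (fun x => 1 - Real.exp x + 2*x*Real.exp x)
    · intro x
      have he := Real.hasDerivAt_exp x
      have := (((((hasDerivAt_id x).const_mul 2).mul he).add (hasDerivAt_id x)).sub (he.const_mul 3)).add_const 3
      refine this.congr_deriv ?_
      simp; ring
    · simp
    · exact hG1
  have hF2 : ∀ x : ℝ, 0 ≤ x → 0 ≤ -8*(Real.exp x)^2 + 8*Real.exp x + 4*x*(Real.exp x)^2 + 4*x*Real.exp x := by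
    apply nonneg_aux _ (fun x => -12*(Real.exp x)^2 + 12*Real.exp x + 8*x*(Real.exp x)^2 + 4*x*Real.exp x)
    · intro x
      have he := Real.hasDerivAt_exp x
      have hsq : HasDerivAt (fun x => (Real.exp x)^2) (2 * (Real.exp x) * Real.exp x) x := by
        exact (he.pow 2).congr_deriv (by norm_num)
      have := (((hsq.const_mul (-8)).add (he.const_mul 8)).add ((((hasDerivAt_id x).const_mul 4).mul hsq))).add ((((hasDerivAt_id x).const_mul 4).mul he))
      refine this.congr_deriv ?_
      simp; ring
    · simp
    · intro x hx
      have h := hG x hx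
      have := Real.exp_pos x
      nlinarith
  have hF1 : ∀ x : ℝ, 0 ≤ x → 0 ≤ -5*(Real.exp x)^2 + 4*Real.exp x + 1 + 2*x*(Real.exp x)^2 + 4*x*Real.exp x := by
    apply nonneg_aux _ (fun x => -8*(Real.exp x)^2 + 8*Real.exp x + 4*x*(Real.exp x)^2 + 4*x*Real.exp x)
    · intro x
      have he := Real.hasDerivAt_exp x
      have hsq : HasDerivAt (fun x => (Real.exp x)^2) (2 * (Real.exp x) * Real.exp x) x := by
        exact (he.pow 2).congr_deriv (by norm_num)
      have := ((((hsq.const_mul (-5)).add (he.const_mul 4)).add_const 1).add ((((hasDerivAt_id x).const_mul 2).mul hsq))).add ((((hasDerivAt_id x).const_mul 4).mul he))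
      refine this.congr_deriv ?_
      simp; ring
    · norm_num
    · exact hF2
  intro s hs
  have hF0 : ∀ x : ℝ, 0 ≤ x → 0 ≤ x*((Real.exp x)^2 + 4*Real.exp x + 1) - 3*(Real.exp x)^2 + 3 := by
    apply nonneg_aux _ (fun x => -5*(Real.exp x)^2 + 4*Real.exp x + 1 + 2*x*(Real.exp x)^2 + 4*x*Real.exp x)
    · intro x
      have he := Real.hasDerivAt_exp x
      have hsq : HasDerivAt (fun x => (Real.exp x)^2) (2 * (Real.exp x) * Real.exp x) x := by
        exact (he.pow 2).congr_deriv (by norm_num)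
      have := (((hasDerivAt_id x).mul ((hsq.add (he.const_mul 4)).add_const 1)).sub (hsq.const_mul 3)).add_const 3
      refine this.congr_deriv ?_
      simp; ring
    · simp
    · exact hF1
  have := hF0 s hs
  linarith

noncomputable def gg (s : ℝ) : ℝ := Real.log (1 - Real.exp (-s))
noncomputable def gg1 (s : ℝ) : ℝ := (Real.exp s - 1)⁻¹
noncomputable def gg2 (s : ℝ) : ℝ := -(Real.exp s / (Real.exp s - 1)^2)
noncomputable def gg3 (s : ℝ) : ℝ := Real.exp s * (Real.exp s + 1) / (Real.exp s - 1)^3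
noncomputable def gg4 (s : ℝ) : ℝ := -(Real.exp s * ((Real.exp s)^2 + 4*Real.exp s + 1) / (Real.exp s - 1)^4)

lemma exp_sub_one_ne {s : ℝ} (hs : s ≠ 0) : Real.exp s - 1 ≠ 0 :=
  sub_ne_zero.2 (fun h => hs ((Real.exp_eq_one_iff s).1 h))

lemma one_sub_exp_neg_ne {s : ℝ} (hs : s ≠ 0) : 1 - Real.exp (-s) ≠ 0 := by
  have : Real.exp (-s) ≠ 1 := fun h => hs (by simpa using (Real.exp_eq_one_iff (-s)).1 h)
  intro h; exact this (by linarith [sub_eq_zero.1 h])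

lemma hgg {s : ℝ} (hs : s ≠ 0) : HasDerivAt gg (gg1 s) s := by
  have h1 : 1 - Real.exp (-s) ≠ 0 := one_sub_exp_neg_ne hs
  have hd : HasDerivAt (fun s : ℝ => 1 - Real.exp (-s)) (Real.exp (-s)) s := by
    have := ((Real.hasDerivAt_exp (-s)).comp s ((hasDerivAt_id s).neg))
    have h2 := (hasDerivAt_const s (1:ℝ)).sub this
    refine h2.congr_deriv ?_
    simp
  have := hd.log h1
  refine this.congr_deriv ?_
  unfold gg1
  rw [Real.exp_neg]
  have he := (Real.exp_pos s).ne'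
  have h2 := exp_sub_one_ne hs
  field_simp

lemma hgg1 {s : ℝ} (hs : s ≠ 0) : HasDerivAt gg1 (gg2 s) s := by
  have h1 := exp_sub_one_ne hs
  have hd : HasDerivAt (fun s : ℝ => Real.exp s - 1) (Real.exp s) s := (Real.hasDerivAt_exp s).sub_const 1
  have := hd.inv h1
  refine this.congr_deriv ?_
  unfold gg2
  field_simp

lemma hgg2 {s : ℝ} (hs : s ≠ 0) : HasDerivAt gg2 (gg3 s) s := by
  have h1 := exp_sub_one_ne hs
  have he := Real.hasDerivAt_exp s
  have hd : HasDerivAt (fun s : ℝ => (Real.exp s - 1)^2) (2*(Real.exp s - 1)*Real.exp s) s := by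
    have := (he.sub_const 1).pow 2
    refine this.congr_deriv ?_; ring
  have h2 : (Real.exp s - 1)^2 ≠ 0 := pow_ne_zero _ h1
  have := (he.div hd h2).neg
  refine this.congr_deriv ?_
  unfold gg3
  field_simp
  ring

lemma hgg3 {s : ℝ} (hs : s ≠ 0) : HasDerivAt gg3 (gg4 s) s := by
  have h1 := exp_sub_one_ne hs
  have he := Real.hasDerivAt_exp s
  have hnum : HasDerivAt (fun s : ℝ => Real.exp s * (Real.exp s + 1)) (Real.exp s * (Real.exp s + 1) + Real.exp s * Real.exp s) s := by
    exact he.mul (he.add_const 1)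
  have hden : HasDerivAt (fun s : ℝ => (Real.exp s - 1)^3) (3*(Real.exp s - 1)^2*Real.exp s) s := by
    have := (he.sub_const 1).pow 3
    refine this.congr_deriv (by norm_num)
  have h3 : (Real.exp s - 1)^3 ≠ 0 := pow_ne_zero _ h1
  have := hnum.div hden h3
  refine this.congr_deriv ?_
  unfold gg4
  field_simp
  ring

lemma gg3_odd (s : ℝ) : gg3 (-s) = -gg3 s := by
  by_cases hs : s = 0
  · simp [hs, gg3]
  · unfold gg3
    rw [Real.exp_neg]
    have he := (Real.exp_pos s).ne'
    have h1 := exp_sub_one_ne hs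
    have h2 : (Real.exp s)⁻¹ - 1 ≠ 0 := by
      intro h
      apply h1
      have := Real.exp_pos s
      field_simp at h
      linarith
    rw [← neg_div, div_eq_div_iff (pow_ne_zero 3 h2) (pow_ne_zero 3 h1)]
    field_simp
    ring

noncomputable def phiQ (s : ℝ) : ℝ := s^3 * gg3 s

lemma hphiQ {x : ℝ} (hx : x ≠ 0) : HasDerivAt phiQ (3*x^2 * gg3 x + x^3 * gg4 x) x := by
  have := (hasDerivAt_pow 3 x).mul (hgg3 hx)
  refine this.congr_deriv (by norm_num)

lemma phiQ_anti : AntitoneOn phiQ (Set.Ioi (0:ℝ)) := by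
  apply antitoneOn_of_deriv_nonpos (convex_Ioi 0)
  · intro x hx
    exact (hphiQ (ne_of_gt hx)).continuousAt.continuousWithinAt
  · intro x hx
    rw [interior_Ioi] at hx
    exact (hphiQ (ne_of_gt hx)).differentiableAt.differentiableWithinAt
  · intro x hx
    rw [interior_Ioi] at hx
    rw [(hphiQ (ne_of_gt hx)).deriv]
    have hE1 : 1 < Real.exp x := by
      rw [show (1:ℝ) = Real.exp 0 by simp]
      exact Real.exp_lt_exp.2 hx
    have hEne : Real.exp x - 1 ≠ 0 := by linarith
    have hkey := key_ineq x (le_of_lt hx)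
    have hrw : 3*x^2 * gg3 x + x^3 * gg4 x
        = x^2 * Real.exp x / (Real.exp x - 1)^4 *
          (3*((Real.exp x)^2 - 1) - x*((Real.exp x)^2 + 4*Real.exp x + 1)) := by
      unfold gg3 gg4
      field_simp
      ring
    rw [hrw]
    apply mul_nonpos_of_nonneg_of_nonpos
    · positivity
    · linarith

lemma D3_nonpos {c t : ℝ} (hc : 1 < c) (ht : 0 < t) : c^3 * gg3 (c*t) - gg3 t ≤ 0 := by
  have hct : t < c * t := by nlinarith
  have h1 : phiQ (c*t) ≤ phiQ t :=
    phiQ_anti (Set.mem_Ioi.2 ht) (Set.mem_Ioi.2 (by nlinarith)) (le_of_lt hct)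
  have ht3 : (0:ℝ) < t^3 := by positivity
  have h2 : t^3 * (c^3 * gg3 (c*t)) ≤ t^3 * gg3 t := by
    calc t^3 * (c^3 * gg3 (c*t)) = (c*t)^3 * gg3 (c*t) := by ring
    _ ≤ t^3 * gg3 t := h1
  have := (mul_le_mul_iff_right₀ ht3).1 h2
  linarith

theorem stmt6 (α β : ℝ) (h1 : 1 < β - α) :
    (∀ t ∈ Set.Ioi (0:ℝ), iteratedDeriv 3 (fun t => Real.log ((fun t : ℝ => if t = 0 then β - α else (Real.exp (-α*t) - Real.exp (-β*t)) / (1 - Real.exp (-t))) t)) t ≤ 0) ∧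
    (∀ t ∈ Set.Iio (0:ℝ), 0 ≤ iteratedDeriv 3 (fun t => Real.log ((fun t : ℝ => if t = 0 then β - α else (Real.exp (-α*t) - Real.exp (-β*t)) / (1 - Real.exp (-t))) t)) t) := by
  have hc : 1 < β - α := h1
  set c : ℝ := β - α with hcdef
  have hc0 : (0:ℝ) < c := by linarith
  have hct : ∀ {t : ℝ}, t ≠ 0 → c * t ≠ 0 := fun ht => mul_ne_zero (ne_of_gt hc0) ht
  set LQ : ℝ → ℝ := fun t => Real.log ((fun t : ℝ => if t = 0 then β - α else (Real.exp (-α*t) - Real.exp (-β*t)) / (1 - Real.exp (-t))) t) with hLQ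
  set F : ℝ → ℝ := fun t => -α * t + gg (c*t) - gg t with hFdef
  set D1 : ℝ → ℝ := fun t => -α + c * gg1 (c*t) - gg1 t with hD1def
  set D2 : ℝ → ℝ := fun t => c^2 * gg2 (c*t) - gg2 t with hD2def
  have hEq : ∀ t : ℝ, t ≠ 0 → LQ t = F t := by
    intro t ht
    have hden := one_sub_exp_neg_ne ht
    have hnum2 := one_sub_exp_neg_ne (hct ht)
    have hfac : Real.exp (-α*t) - Real.exp (-β*t)
        = Real.exp (-α*t) * (1 - Real.exp (-(c*t))) := by
      rw [mul_sub, mul_one, ← Real.exp_add]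
      congr 2
      rw [hcdef]; ring
    simp only [hLQ, hFdef, if_neg ht]
    rw [hfac, Real.log_div (mul_ne_zero (Real.exp_ne_zero _) hnum2) hden,
      Real.log_mul (Real.exp_ne_zero _) hnum2, Real.log_exp]
    simp [gg]
  have hF : ∀ t : ℝ, t ≠ 0 → HasDerivAt F (D1 t) t := by
    intro t ht
    have h1 : HasDerivAt (fun t : ℝ => gg (c*t)) (gg1 (c*t) * c) t :=
      by
      have hcm : HasDerivAt (fun y : ℝ => c * y) c t := by
        simpa using (hasDerivAt_id t).const_mul c
      exact (hgg (hct ht)).comp t hcm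
    have := (((hasDerivAt_id t).const_mul (-α)).add h1).sub (hgg ht)
    refine this.congr_deriv ?_
    simp [hD1def]; ring
  have hD1 : ∀ t : ℝ, t ≠ 0 → HasDerivAt D1 (D2 t) t := by
    intro t ht
    have h1 : HasDerivAt (fun t : ℝ => gg1 (c*t)) (gg2 (c*t) * c) t :=
      by
      have hcm : HasDerivAt (fun y : ℝ => c * y) c t := by
        simpa using (hasDerivAt_id t).const_mul c
      exact (hgg1 (hct ht)).comp t hcm
    have := ((hasDerivAt_const t (-α)).add (h1.const_mul c)).sub (hgg1 ht)
    refine this.congr_deriv ?_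
    simp [hD2def]; ring
  have hD2 : ∀ t : ℝ, t ≠ 0 → HasDerivAt D2 (c^3 * gg3 (c*t) - gg3 t) t := by
    intro t ht
    have h1 : HasDerivAt (fun t : ℝ => gg2 (c*t)) (gg3 (c*t) * c) t :=
      by
      have hcm : HasDerivAt (fun y : ℝ => c * y) c t := by
        simpa using (hasDerivAt_id t).const_mul c
      exact (hgg2 (hct ht)).comp t hcm
    have := (h1.const_mul (c^2)).sub (hgg2 ht)
    refine this.congr_deriv ?_
    ring
  have hEv : ∀ t : ℝ, t ≠ 0 → LQ =ᶠ[nhds t] F := fun t ht =>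
    (eventually_ne_nhds ht).mono (fun u hu => hEq u hu)
  have e1 : ∀ t : ℝ, t ≠ 0 → deriv LQ t = D1 t := fun t ht =>
    ((hF t ht).congr_of_eventuallyEq (hEv t ht)).deriv
  have e2 : ∀ t : ℝ, t ≠ 0 → deriv (deriv LQ) t = D2 t := by
    intro t ht
    have hev2 : deriv LQ =ᶠ[nhds t] D1 := (eventually_ne_nhds ht).mono (fun u hu => e1 u hu)
    exact ((hD1 t ht).congr_of_eventuallyEq hev2).deriv
  have e3 : ∀ t : ℝ, t ≠ 0 → deriv (deriv (deriv LQ)) t = c^3 * gg3 (c*t) - gg3 t := by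
    intro t ht
    have hev3 : deriv (deriv LQ) =ᶠ[nhds t] D2 := (eventually_ne_nhds ht).mono (fun u hu => e2 u hu)
    exact ((hD2 t ht).congr_of_eventuallyEq hev3).deriv
  have key : ∀ t : ℝ, t ≠ 0 → iteratedDeriv 3 LQ t = c^3 * gg3 (c*t) - gg3 t := by
    intro t ht
    rw [show (3:ℕ) = 2 + 1 by rfl, iteratedDeriv_succ,
      show (2:ℕ) = 1 + 1 by rfl, iteratedDeriv_succ, iteratedDeriv_one]
    exact e3 t ht
  constructor
  · intro t ht
    rw [key t (ne_of_gt (Set.mem_Ioi.1 ht))]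
    exact D3_nonpos hc (Set.mem_Ioi.1 ht)
  · intro t ht
    have ht' : t < 0 := Set.mem_Iio.1 ht
    rw [key t (ne_of_lt ht')]
    have hodd : c^3 * gg3 (c*t) - gg3 t = -(c^3 * gg3 (c*(-t)) - gg3 (-t)) := by
      rw [show c*(-t) = -(c*t) by ring, gg3_odd (c*t), gg3_odd t]
      ring
    rw [hodd]
    have := D3_nonpos hc (show (0:ℝ) < -t by linarith)
    linarith
end

section
/- If (α-β)/(λ-μ) > 1, then the function H(t) = (e^{αt} - e^{βt})/(e^{λt} - e^{μt}) for t ≠ 0, with H(0) = (β-α)/(λ-μ), is logarithmically convex on ℝ; if 0 < (α-β)/(λ-μ) < 1, it is logarithmically concave on ℝ. -/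
open Set Filter Real Topology

noncomputable def psiF (x : ℝ) : ℝ := Real.log (Real.exp x - 1) - Real.log x
noncomputable def psi1 (x : ℝ) : ℝ := Real.exp x / (Real.exp x - 1) - 1/x
noncomputable def psi2 (x : ℝ) : ℝ := 1/x^2 - Real.exp x / (Real.exp x - 1)^2
noncomputable def mfun (s : ℝ) : ℝ := 1 - s^2 * Real.exp s / (Real.exp s - 1)^2

lemma exp_sub_one_ne_s12 {x : ℝ} (hx : x ≠ 0) : Real.exp x - 1 ≠ 0 := by
  intro h
  have : Real.exp x = Real.exp 0 := by rw [Real.exp_zero]; linarith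
  exact hx (Real.exp_injective this)

lemma hasDerivAt_psiF {x : ℝ} (hx : x ≠ 0) : HasDerivAt psiF (psi1 x) x := by
  have h1 : HasDerivAt (fun x : ℝ => Real.exp x - 1) (Real.exp x) x :=
    (Real.hasDerivAt_exp x).sub_const 1
  have h2 := h1.log (exp_sub_one_ne_s12 hx)
  have h3 := Real.hasDerivAt_log hx
  have h4 := h2.sub h3
  refine h4.congr_deriv ?_
  simp only [psi1]
  rw [one_div]

lemma hasDerivAt_psi1 {x : ℝ} (hx : x ≠ 0) : HasDerivAt psi1 (psi2 x) x := by
  have h1 : HasDerivAt (fun x : ℝ => Real.exp x - 1) (Real.exp x) x :=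
    (Real.hasDerivAt_exp x).sub_const 1
  have h2 := (Real.hasDerivAt_exp x).div h1 (exp_sub_one_ne_s12 hx)
  have h3 : HasDerivAt (fun x : ℝ => 1/x) (-(1/x^2)) x := by
    simpa [one_div] using hasDerivAt_inv hx
  have h4 := h2.sub h3
  refine h4.congr_deriv ?_
  simp only [psi2]
  field_simp
  ring

lemma q1_nonneg {s : ℝ} (hs : 0 ≤ s) : 0 ≤ (s-1)*Real.exp s + 1 := by
  have hd : ∀ u : ℝ, HasDerivAt (fun v : ℝ => (v-1)*Real.exp v + 1) (u * Real.exp u) u := by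
    intro u
    have := (((hasDerivAt_id u).sub_const 1).mul (Real.hasDerivAt_exp u)).add_const 1
    refine this.congr_deriv ?_
    simp only [id_eq]
    ring
  have mono : MonotoneOn (fun v : ℝ => (v-1)*Real.exp v + 1) (Ici 0) := by
    apply monotoneOn_of_deriv_nonneg (convex_Ici 0)
    · exact (Continuous.continuousOn (by continuity))
    · intro u _
      exact (hd u).differentiableAt.differentiableWithinAt
    · intro u hu
      rw [interior_Ici] at hu
      rw [(hd u).deriv]
      have hu' : 0 < u := hu
      positivity
  have := mono (self_mem_Ici) hs hs
  simpa using this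

lemma q_nonneg {s : ℝ} (hs : 0 ≤ s) : 0 ≤ (s-2)*Real.exp s + s + 2 := by
  have hd : ∀ u : ℝ, HasDerivAt (fun v : ℝ => (v-2)*Real.exp v + v + 2) ((u-1)*Real.exp u + 1) u := by
    intro u
    have := ((((hasDerivAt_id u).sub_const 2).mul (Real.hasDerivAt_exp u)).add (hasDerivAt_id u)).add_const 2
    refine this.congr_deriv ?_
    simp only [id_eq]
    ring
  have mono : MonotoneOn (fun v : ℝ => (v-2)*Real.exp v + v + 2) (Ici 0) := by
    apply monotoneOn_of_deriv_nonneg (convex_Ici 0)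
    · exact (Continuous.continuousOn (by continuity))
    · intro u _
      exact (hd u).differentiableAt.differentiableWithinAt
    · intro u hu
      rw [interior_Ici] at hu
      rw [(hd u).deriv]
      exact q1_nonneg (le_of_lt hu)
  have := mono (self_mem_Ici) hs hs
  simpa using this

lemma hasDerivAt_mfun {s : ℝ} (hs : s ≠ 0) :
    HasDerivAt mfun (Real.exp s * (s * ((s-2)*Real.exp s + s + 2)) / (Real.exp s - 1)^3) s := by
  have hne := exp_sub_one_ne_s12 hs
  have hnum : HasDerivAt (fun v : ℝ => v^2 * Real.exp v) (2*s*Real.exp s + s^2*Real.exp s) s := by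
    have := ((hasDerivAt_pow 2 s).mul (Real.hasDerivAt_exp s))
    refine this.congr_deriv ?_
    ring
  have hden : HasDerivAt (fun v : ℝ => (Real.exp v - 1)^2) (2*(Real.exp s - 1)*Real.exp s) s := by
    have h1 : HasDerivAt (fun v : ℝ => Real.exp v - 1) (Real.exp s) s :=
      (Real.hasDerivAt_exp s).sub_const 1
    have := h1.pow 2
    refine this.congr_deriv ?_
    ring
  have hq := hnum.div hden (pow_ne_zero 2 hne)
  have := (hasDerivAt_const s (1:ℝ)).sub hq
  refine this.congr_deriv ?_
  field_simp
  ring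

lemma mfun_even (s : ℝ) : mfun (-s) = mfun s := by
  by_cases hs : s = 0
  · rw [hs, neg_zero]
  · have h1 := exp_sub_one_ne_s12 hs
    have h2 := exp_sub_one_ne_s12 (neg_ne_zero.mpr hs)
    simp only [mfun, Real.exp_neg, neg_sq]
    have h3 := Real.exp_ne_zero s
    have key : ((Real.exp s)⁻¹ - 1)^2 = (Real.exp s - 1)^2 * ((Real.exp s)^2)⁻¹ := by
      field_simp
      ring
    rw [key]
    field_simp

lemma mfun_mono : MonotoneOn mfun (Ioi 0) := by
  apply monotoneOn_of_deriv_nonneg (convex_Ioi 0)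
  · intro u hu
    exact (hasDerivAt_mfun (ne_of_gt hu)).differentiableAt.continuousAt.continuousWithinAt
  · intro u hu
    rw [interior_Ioi] at hu
    exact (hasDerivAt_mfun (ne_of_gt hu)).differentiableAt.differentiableWithinAt
  · intro u hu
    rw [interior_Ioi] at hu
    rw [(hasDerivAt_mfun (ne_of_gt hu)).deriv]
    have h1 : (0:ℝ) < Real.exp u := Real.exp_pos u
    have h2 : (0:ℝ) < Real.exp u - 1 := by
      have : (1:ℝ) < Real.exp u := Real.one_lt_exp_iff.mpr hu
      linarith
    have h3 := q_nonneg (le_of_lt hu)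
    have h4 : 0 ≤ u * ((u-2)*Real.exp u + u + 2) := mul_nonneg (le_of_lt hu) h3
    positivity

lemma mfun_le {u v : ℝ} (hu : u ≠ 0) (huv : |u| ≤ |v|) : mfun u ≤ mfun v := by
  have h1 : ∀ w : ℝ, mfun w = mfun |w| := by
    intro w
    rcases abs_cases w with ⟨h, _⟩ | ⟨h, _⟩
    · rw [h]
    · rw [h, mfun_even]
  have hu' : 0 < |u| := abs_pos.mpr hu
  rw [h1 u, h1 v]
  exact mfun_mono hu' (lt_of_lt_of_le hu' huv) huv

lemma psi2_key {a b t : ℝ} (hb : b ≠ 0) (habs : |b| ≤ |a|) (ht : t ≠ 0) :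
    b^2 * psi2 (b*t) ≤ a^2 * psi2 (a*t) := by
  have ha : a ≠ 0 := by
    intro h
    rw [h, abs_zero] at habs
    exact hb (abs_eq_zero.mp (le_antisymm habs (abs_nonneg b)))
  have key : ∀ c : ℝ, c ≠ 0 → c^2 * psi2 (c*t) = mfun (c*t) / t^2 := by
    intro c hc
    have hct : c*t ≠ 0 := mul_ne_zero hc ht
    have h1 := exp_sub_one_ne_s12 hct
    simp only [psi2, mfun]
    field_simp
  rw [key a ha, key b hb]
  have ht2 : (0:ℝ) < t^2 := by positivity
  rw [div_le_div_iff_of_pos_right ht2]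
  apply mfun_le (mul_ne_zero hb ht)
  rw [abs_mul, abs_mul]
  exact mul_le_mul_of_nonneg_right habs (abs_nonneg t)

lemma tendsto_exp_ratio : Tendsto (fun x : ℝ => (Real.exp x - 1)/x) (𝓝[≠] (0:ℝ)) (𝓝 1) := by
  have h := hasDerivAt_iff_tendsto_slope.mp (Real.hasDerivAt_exp 0)
  rw [Real.exp_zero] at h
  refine h.congr (fun x => ?_)
  simp [slope_def_field, Real.exp_zero]

lemma tendsto_T2 : Tendsto (fun x : ℝ => (Real.exp x - 1 - x)/x^2) (𝓝[≠] (0:ℝ)) (𝓝 (1/2)) := by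
  apply HasDerivAt.lhopital_zero_nhdsNE (f' := fun x : ℝ => Real.exp x - 1) (g' := fun x : ℝ => 2*x)
  · filter_upwards with x
    exact ((Real.hasDerivAt_exp x).sub_const 1).sub (hasDerivAt_id x)
  · filter_upwards with x
    simpa using hasDerivAt_pow 2 x
  · filter_upwards [self_mem_nhdsWithin] with x hx
    have : x ≠ 0 := hx
    positivity
  · have : Tendsto (fun x : ℝ => Real.exp x - 1 - x) (𝓝 0) (𝓝 0) := by
      have : Continuous (fun x : ℝ => Real.exp x - 1 - x) := by continuity
      simpa using this.tendsto 0
    exact this.mono_left nhdsWithin_le_nhds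
  · have : Tendsto (fun x : ℝ => x^2) (𝓝 (0:ℝ)) (𝓝 0) := by
      have : Continuous (fun x : ℝ => x^2) := by continuity
      simpa using this.tendsto 0
    exact this.mono_left nhdsWithin_le_nhds
  · have h2 : Tendsto (fun x : ℝ => ((Real.exp x - 1)/x)/2) (𝓝[≠] (0:ℝ)) (𝓝 (1/2)) :=
      tendsto_exp_ratio.div_const 2
    refine h2.congr' ?_
    filter_upwards [self_mem_nhdsWithin] with x hx
    have hx' : x ≠ 0 := hx
    rw [div_div, mul_comm]

lemma tendsto_psi1_zero : Tendsto psi1 (𝓝[≠] (0:ℝ)) (𝓝 (1/2)) := by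
  have h := tendsto_T2.div tendsto_exp_ratio one_ne_zero
  have h2 : Tendsto (fun x : ℝ => 1 - ((Real.exp x - 1 - x)/x^2) / ((Real.exp x - 1)/x))
      (𝓝[≠] (0:ℝ)) (𝓝 (1 - 1/2/1)) := tendsto_const_nhds.sub h
  norm_num at h2
  refine h2.congr' ?_
  filter_upwards [self_mem_nhdsWithin] with x hx
  have hx' : x ≠ 0 := hx
  have h1 := exp_sub_one_ne_s12 hx'
  simp only [psi1]
  field_simp
  ring

lemma tendsto_psiF_zero : Tendsto psiF (𝓝[≠] (0:ℝ)) (𝓝 0) := by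
  have hlog : Tendsto Real.log (𝓝 (1:ℝ)) (𝓝 0) := by
    have := (Real.continuousAt_log (one_ne_zero)).tendsto
    rwa [Real.log_one] at this
  have h := hlog.comp tendsto_exp_ratio
  refine h.congr' ?_
  filter_upwards [self_mem_nhdsWithin] with x hx
  have hx' : x ≠ 0 := hx
  simp only [Function.comp, psiF]
  rw [Real.log_div (exp_sub_one_ne_s12 hx') hx']

lemma convexOn_univ_of_pieces {f : ℝ → ℝ} (h1 : ConvexOn ℝ (Iic (0:ℝ)) f)
    (h2 : ConvexOn ℝ (Ici (0:ℝ)) f)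
    (h3 : ∀ y, y < 0 → ∀ z, 0 < z → (f 0 - f y)/(0 - y) ≤ (f z - f 0)/(z - 0)) :
    ConvexOn ℝ Set.univ f := by
  apply convexOn_of_slope_mono_adjacent convex_univ
  intro x y z _ _ hxy hyz
  rcases lt_trichotomy y 0 with hy | hy | hy
  · rcases le_or_gt z 0 with hz | hz
    · exact h1.slope_mono_adjacent (le_of_lt (hxy.trans hy)) hz hxy hyz
    · have s1 : (f y - f x)/(y - x) ≤ (f 0 - f y)/(0 - y) :=
        h1.slope_mono_adjacent (le_of_lt (hxy.trans hy)) self_mem_Iic hxy hy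
      have s2 := h3 y hy z hz
      set σ := (f 0 - f y)/(0 - y) with hσ
      have hy0 : (0:ℝ) < 0 - y := by linarith
      have hfz : f 0 + σ * z ≤ f z := by
        rw [le_div_iff₀ (by linarith : (0:ℝ) < z - 0)] at s2
        linarith
      have hf0 : f 0 - f y = σ * (0 - y) := (div_mul_cancel₀ _ (ne_of_gt hy0)).symm
      have key : σ ≤ (f z - f y)/(z - y) := by
        rw [le_div_iff₀ (by linarith : (0:ℝ) < z - y)]
        have hr : σ * (z - y) = σ * z + σ * (0 - y) := by ring
        linarith
      exact s1.trans key
  · subst hy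
    exact h3 x hxy z hyz
  · rcases le_or_gt 0 x with hx | hx
    · exact h2.slope_mono_adjacent hx (le_of_lt (hy.trans hyz)) hxy hyz
    · have s2 : (f y - f 0)/(y - 0) ≤ (f z - f y)/(z - y) :=
        h2.slope_mono_adjacent self_mem_Ici (le_of_lt (hy.trans hyz)) hy hyz
      have s1 := h3 x hx y hy
      set σ := (f y - f 0)/(y - 0) with hσ
      have hy0 : (0:ℝ) < y - 0 := by linarith
      have hfx : f 0 - f x ≤ σ * (0 - x) := by
        rw [div_le_iff₀ (by linarith : (0:ℝ) < 0 - x)] at s1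
        linarith [s1]
      have hf0 : f y - f 0 = σ * (y - 0) := (div_mul_cancel₀ _ (ne_of_gt hy0)).symm
      have key : (f y - f x)/(y - x) ≤ σ := by
        rw [div_le_iff₀ (by linarith : (0:ℝ) < y - x)]
        have hr : σ * (y - x) = σ * (y - 0) + σ * (0 - x) := by ring
        linarith
      exact key.trans s2

theorem masterConvex (α β lam mu : ℝ)
    (h1 : (α - β)/(lam - mu) > 1) :
    ConvexOn ℝ Set.univ (fun t => Real.log ((fun t : ℝ => if t = 0 then (β - α)/(lam - mu)
      else (Real.exp (α*t) - Real.exp (β*t)) / (Real.exp (lam*t) - Real.exp (mu*t))) t)) := by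
  set a := α - β with ha_def
  set b := lam - mu with hb_def
  have hb : b ≠ 0 := by
    intro h
    rw [h] at h1
    simp at h1
    linarith
  have ha : a ≠ 0 := by
    intro h
    rw [h] at h1
    simp at h1
    linarith
  have habs : |b| ≤ |a| := by
    rcases lt_or_gt_of_ne hb with hbneg | hbpos
    · have h2 : a/b * b < 1 * b := mul_lt_mul_of_neg_right h1 hbneg
      rw [div_mul_cancel₀ _ hb, one_mul] at h2
      rw [abs_of_neg hbneg, abs_of_neg (h2.trans hbneg)]
      linarith
    · have h2 : 1 * b < a/b * b := mul_lt_mul_of_pos_right h1 hbpos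
      rw [div_mul_cancel₀ _ hb, one_mul] at h2
      rw [abs_of_pos hbpos, abs_of_pos (hbpos.trans h2)]
      linarith
  set k := β - mu with hk_def
  set L : ℝ → ℝ := fun t => Real.log (a/b) + k*t + psiF (a*t) - psiF (b*t) with hL_def
  have hFL : (fun t => Real.log ((fun t : ℝ => if t = 0 then (β - α)/(lam - mu)
      else (Real.exp (α*t) - Real.exp (β*t)) / (Real.exp (lam*t) - Real.exp (mu*t))) t)) = L := by
    funext t
    by_cases ht : t = 0
    · subst ht
      have hval : (β - α) / (lam - mu) = -(a/b) := by rw [ha_def, hb_def]; ring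
      have hpsi0 : psiF 0 = 0 := by simp [psiF]
      simp only [hL_def, mul_zero, add_zero, hpsi0, sub_zero]
      rw [if_pos trivial, hval, Real.log_neg_eq_log]
    · simp only [if_neg ht, hL_def]
      have hat : a*t ≠ 0 := mul_ne_zero ha ht
      have hbt : b*t ≠ 0 := mul_ne_zero hb ht
      have e1 : Real.exp (α*t) - Real.exp (β*t) = Real.exp (β*t) * (Real.exp (a*t) - 1) := by
        rw [mul_sub, mul_one, ← Real.exp_add]
        congr 2
        rw [ha_def]; ring
      have e2 : Real.exp (lam*t) - Real.exp (mu*t) = Real.exp (mu*t) * (Real.exp (b*t) - 1) := by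
        rw [mul_sub, mul_one, ← Real.exp_add]
        congr 2
        rw [hb_def]; ring
      rw [e1, e2]
      have hn1 : Real.exp (β*t) * (Real.exp (a*t) - 1) ≠ 0 :=
        mul_ne_zero (Real.exp_ne_zero _) (exp_sub_one_ne_s12 hat)
      have hn2 : Real.exp (mu*t) * (Real.exp (b*t) - 1) ≠ 0 :=
        mul_ne_zero (Real.exp_ne_zero _) (exp_sub_one_ne_s12 hbt)
      rw [Real.log_div hn1 hn2,
        Real.log_mul (Real.exp_ne_zero _) (exp_sub_one_ne_s12 hat),
        Real.log_mul (Real.exp_ne_zero _) (exp_sub_one_ne_s12 hbt),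
        Real.log_exp, Real.log_exp]
      simp only [psiF]
      rw [Real.log_mul ha ht, Real.log_mul hb ht, Real.log_div ha hb, hk_def]
      ring
  rw [hFL]
  -- derivative facts
  set D : ℝ → ℝ := fun t => k + a * psi1 (a*t) - b * psi1 (b*t) with hD_def
  have hLd : ∀ t : ℝ, t ≠ 0 → HasDerivAt L (D t) t := by
    intro t ht
    have hat : a*t ≠ 0 := mul_ne_zero ha ht
    have hbt : b*t ≠ 0 := mul_ne_zero hb ht
    have hma : HasDerivAt (fun t : ℝ => a*t) a t := by
      simpa using (hasDerivAt_id t).const_mul a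
    have hmb : HasDerivAt (fun t : ℝ => b*t) b t := by
      simpa using (hasDerivAt_id t).const_mul b
    have h1 : HasDerivAt (fun t : ℝ => psiF (a*t)) (psi1 (a*t) * a) t :=
      (hasDerivAt_psiF hat).comp t hma
    have h2 : HasDerivAt (fun t : ℝ => psiF (b*t)) (psi1 (b*t) * b) t :=
      (hasDerivAt_psiF hbt).comp t hmb
    have hk1 : HasDerivAt (fun t : ℝ => Real.log (a/b) + k*t) k t := by
      simpa using ((hasDerivAt_id t).const_mul k).const_add (Real.log (a/b))
    have := (hk1.add h1).sub h2
    refine this.congr_deriv ?_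
    rw [hD_def]
    ring
  have hLderiv_eq : ∀ t : ℝ, t ≠ 0 → deriv L t = D t := fun t ht => (hLd t ht).deriv
  have hDd : ∀ t : ℝ, t ≠ 0 → HasDerivAt D (a^2 * psi2 (a*t) - b^2 * psi2 (b*t)) t := by
    intro t ht
    have hat : a*t ≠ 0 := mul_ne_zero ha ht
    have hbt : b*t ≠ 0 := mul_ne_zero hb ht
    have hma : HasDerivAt (fun t : ℝ => a*t) a t := by
      simpa using (hasDerivAt_id t).const_mul a
    have hmb : HasDerivAt (fun t : ℝ => b*t) b t := by
      simpa using (hasDerivAt_id t).const_mul b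
    have h1 : HasDerivAt (fun t : ℝ => psi1 (a*t)) (psi2 (a*t) * a) t :=
      (hasDerivAt_psi1 hat).comp t hma
    have h2 : HasDerivAt (fun t : ℝ => psi1 (b*t)) (psi2 (b*t) * b) t :=
      (hasDerivAt_psi1 hbt).comp t hmb
    have := ((hasDerivAt_const t k).add (h1.const_mul a)).sub (h2.const_mul b)
    refine this.congr_deriv ?_
    ring
  have hD2nonneg : ∀ t : ℝ, t ≠ 0 → 0 ≤ a^2 * psi2 (a*t) - b^2 * psi2 (b*t) :=
    fun t ht => sub_nonneg.mpr (psi2_key hb habs ht)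
  have hev : ∀ t : ℝ, t ≠ 0 → deriv L =ᶠ[𝓝 t] D := by
    intro t ht
    have hmem : {x : ℝ | x ≠ 0} ∈ 𝓝 t := by
      apply isOpen_ne.mem_nhds ht
    filter_upwards [hmem] with x hx
    exact hLderiv_eq x hx
  -- continuity
  have hmap : ∀ c : ℝ, c ≠ 0 → Tendsto (fun t : ℝ => c*t) (𝓝[≠] (0:ℝ)) (𝓝[≠] (0:ℝ)) := by
    intro c hc
    rw [tendsto_nhdsWithin_iff]
    constructor
    · have : Tendsto (fun t : ℝ => c*t) (𝓝 0) (𝓝 (c*0)) :=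
        (continuous_const.mul continuous_id).tendsto 0
      rw [mul_zero] at this
      exact this.mono_left nhdsWithin_le_nhds
    · filter_upwards [self_mem_nhdsWithin] with t ht
      have ht' : t ≠ 0 := ht
      simpa using mul_ne_zero hc ht'
  have hcontL0 : ContinuousAt L 0 := by
    have hT : Tendsto L (𝓝[≠] (0:ℝ)) (𝓝 (L 0)) := by
      have h1 : Tendsto (fun t : ℝ => Real.log (a/b) + k*t + psiF (a*t) - psiF (b*t))
          (𝓝[≠] (0:ℝ)) (𝓝 (Real.log (a/b) + k*0 + 0 - 0)) := by
        refine ((Filter.Tendsto.add ?_ ?_).add ?_).sub ?_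
        · exact tendsto_const_nhds
        · exact ((continuous_const.mul continuous_id).tendsto 0).mono_left nhdsWithin_le_nhds
        · exact tendsto_psiF_zero.comp (hmap a ha)
        · exact tendsto_psiF_zero.comp (hmap b hb)
      have hL0 : L 0 = Real.log (a/b) + k*0 + 0 - 0 := by
        simp [hL_def, psiF]
      rw [hL0]
      exact h1
    rw [ContinuousAt, ← nhdsNE_sup_pure (0:ℝ), tendsto_sup]
    exact ⟨hT, tendsto_pure_nhds L 0⟩
  have hcontL : Continuous L := by
    rw [continuous_iff_continuousAt]
    intro t
    by_cases ht : t = 0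
    · rw [ht]; exact hcontL0
    · exact (hLd t ht).continuousAt
  -- convexity on pieces
  have hpiece : ∀ s : Set ℝ, Convex ℝ s → (∀ x ∈ interior s, x ≠ 0) → ConvexOn ℝ s L := by
    intro s hs hsub
    apply convexOn_of_deriv2_nonneg hs hcontL.continuousOn
    · intro x hx
      exact (hLd x (hsub x hx)).differentiableAt.differentiableWithinAt
    · intro x hx
      have hx0 := hsub x hx
      exact ((hDd x hx0).differentiableAt.congr_of_eventuallyEq (hev x hx0)).differentiableWithinAt
    · intro x hx
      have hx0 := hsub x hx
      have h2 : deriv (deriv L) x = deriv D x := (hev x hx0).deriv_eq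
      have h3 : deriv^[2] L x = deriv (deriv L) x := by
        simp [Function.iterate_succ_apply']
      rw [h3, h2, (hDd x hx0).deriv]
      exact hD2nonneg x hx0
  have hIci : ConvexOn ℝ (Ici (0:ℝ)) L := by
    apply hpiece _ (convex_Ici 0)
    rw [interior_Ici]
    exact fun x hx => ne_of_gt hx
  have hIic : ConvexOn ℝ (Iic (0:ℝ)) L := by
    apply hpiece _ (convex_Iic 0)
    rw [interior_Iic]
    exact fun x hx => ne_of_lt hx
  -- monotonicity of D on each side
  have hDmono : ∀ s : Set ℝ, Convex ℝ s → interior s = s → (∀ x ∈ s, x ≠ 0) → MonotoneOn D s := by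
    intro s hs hint hsub
    apply monotoneOn_of_deriv_nonneg hs
    · intro x hx
      exact (hDd x (hsub x hx)).differentiableAt.continuousAt.continuousWithinAt
    · rw [hint]
      intro x hx
      exact (hDd x (hsub x hx)).differentiableAt.differentiableWithinAt
    · rw [hint]
      intro x hx
      rw [(hDd x (hsub x hx)).deriv]
      exact hD2nonneg x (hsub x hx)
  have hDmono_neg : MonotoneOn D (Iio 0) :=
    hDmono _ (convex_Iio 0) interior_Iio (fun x hx => ne_of_lt hx)
  have hDmono_pos : MonotoneOn D (Ioi 0) :=
    hDmono _ (convex_Ioi 0) interior_Ioi (fun x hx => ne_of_gt hx)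
  -- limit of D at 0
  set d : ℝ := k + a * (1/2) - b * (1/2) with hd_def
  have hDlim : Tendsto D (𝓝[≠] (0:ℝ)) (𝓝 d) := by
    rw [hD_def, hd_def]
    refine (Filter.Tendsto.add tendsto_const_nhds ?_).sub ?_
    · exact (tendsto_psi1_zero.comp (hmap a ha)).const_mul a
    · exact (tendsto_psi1_zero.comp (hmap b hb)).const_mul b
  have hDlim_left : Tendsto D (𝓝[<] (0:ℝ)) (𝓝 d) :=
    hDlim.mono_left (nhdsWithin_mono 0 (fun x hx => ne_of_lt hx))
  have hDlim_right : Tendsto D (𝓝[>] (0:ℝ)) (𝓝 d) :=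
    hDlim.mono_left (nhdsWithin_mono 0 (fun x hx => ne_of_gt hx))
  -- cross slope condition
  have hcross : ∀ y, y < 0 → ∀ z, 0 < z → (L 0 - L y)/(0 - y) ≤ (L z - L 0)/(z - 0) := by
    intro y hy z hz
    obtain ⟨ξ, hξ, hξeq⟩ := exists_deriv_eq_slope L hy hcontL.continuousOn
      (fun x hx => (hLd x (ne_of_lt hx.2)).differentiableAt.differentiableWithinAt)
    obtain ⟨η, hη, hηeq⟩ := exists_deriv_eq_slope L hz hcontL.continuousOn
      (fun x hx => (hLd x (ne_of_gt hx.1)).differentiableAt.differentiableWithinAt)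
    rw [← hξeq, ← hηeq, hLderiv_eq ξ (ne_of_lt hξ.2), hLderiv_eq η (ne_of_gt hη.1)]
    have h1 : D ξ ≤ d := by
      apply ge_of_tendsto hDlim_left
      filter_upwards [Ioo_mem_nhdsLT_of_mem (show (0:ℝ) ∈ Ioc ξ 0 from ⟨hξ.2, le_rfl⟩)] with u hu
      exact hDmono_neg hξ.2 hu.2 (le_of_lt hu.1)
    have h2 : d ≤ D η := by
      apply le_of_tendsto hDlim_right
      filter_upwards [Ioo_mem_nhdsGT_of_mem (show (0:ℝ) ∈ Ico 0 η from ⟨le_rfl, hη.1⟩)] with u hu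
      exact hDmono_pos hu.1 hη.1 (le_of_lt hu.2)
    linarith
  exact convexOn_univ_of_pieces hIic hIci hcross

theorem stmt12 (α β lam mu : ℝ) (hab : α ≠ β) (hlm : lam ≠ mu) :
    ((α - β)/(lam - mu) > 1 → ConvexOn ℝ Set.univ (fun t => Real.log ((fun t : ℝ => if t = 0 then (β - α)/(lam - mu) else (Real.exp (α*t) - Real.exp (β*t)) / (Real.exp (lam*t) - Real.exp (mu*t))) t))) ∧
    (0 < (α - β)/(lam - mu) ∧ (α - β)/(lam - mu) < 1 →
      ConcaveOn ℝ Set.univ (fun t => Real.log ((fun t : ℝ => if t = 0 then (β - α)/(lam - mu) else (Real.exp (α*t) - Real.exp (β*t)) / (Real.exp (lam*t) - Real.exp (mu*t))) t))) := by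
  constructor
  · intro h1
    exact masterConvex α β lam mu h1
  · rintro ⟨h0, h1⟩
    have hr : (lam - mu)/(α - β) > 1 := by
      have : ((α - β)/(lam - mu))⁻¹ = (lam - mu)/(α - β) := by
        rw [inv_div]
      rw [← this]
      exact one_lt_inv₀ h0 |>.mpr h1
    have key := masterConvex lam mu α β hr
    rw [← neg_convexOn_iff]
    have heq : (fun t => Real.log ((fun t : ℝ => if t = 0 then (mu - lam)/(α - β)
        else (Real.exp (lam*t) - Real.exp (mu*t)) / (Real.exp (α*t) - Real.exp (β*t))) t))
        = -(fun t => Real.log ((fun t : ℝ => if t = 0 then (β - α)/(lam - mu)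
        else (Real.exp (α*t) - Real.exp (β*t)) / (Real.exp (lam*t) - Real.exp (mu*t))) t)) := by
      funext t
      simp only [Pi.neg_apply]
      rw [← Real.log_inv]
      congr 1
      by_cases ht : t = 0
      · rw [if_pos ht, if_pos ht]
        rw [show mu - lam = -(lam - mu) by ring, show α - β = -(β - α) by ring,
          neg_div_neg_eq, ← inv_div]
      · rw [if_neg ht, if_neg ht, inv_div]
    rw [← heq]
    exact key
end
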